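/- arXiv:2011.09960 — 8 statements merged into one kernel-verified Lean document; each statement's English description precedes it below -/
import Mathlib

section
/- Let ψ : (0,∞)² → ℝ be sublinear (ψ(x+y) ≤ ψ(x)+ψ(y) and ψ(αx) = αψ(x) for x,y ∈ (0,∞)², α > 0) with ψ(1,1) = 0, and define Ψ(p,q) = Σ_{k : p(k),q(k) > 0} ψ(p(k),q(k)) for probability vectors p,q. Then for all ε > 0 and integers n ≥ 2, the supremum over ε-DP n-tuples (p_i) of min_{i≠j} Ψ(p_i,p_j) equals the supremum over ε-DP n-tuples of avg_{i≠j} Ψ(p_i,p_j), and both equal ((ψ(e^ε,1) + ψ(1,e^ε))/(n−1)) · max_{1 ≤ k ≤ ⌊n/2⌋} k(n−k)/(k·e^ε + n − k). -/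
open scoped BigOperators Classical ComplexOrder
open Matrix

noncomputable section

/-- `p` is a probability vector in `ℝ^d`. -/
def IsProbVec {d : ℕ} (p : Fin d → ℝ) : Prop :=
  (∀ k, 0 ≤ p k) ∧ ∑ k, p k = 1

/-- `(p i)_{i=1}^n` is an `ε`-differentially private `n`-tuple of probability vectors. -/
def IsDP {n d : ℕ} (ε : ℝ) (p : Fin n → Fin d → ℝ) : Prop :=
  (∀ i, IsProbVec (p i)) ∧ ∀ i j k, p i k ≤ Real.exp ε * p j k

/-- Classical RLD Fisher information `J_θ(p,q)`. -/
def Jc {d : ℕ} (θ : ℝ) (p q : Fin d → ℝ) : ℝ :=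
  ∑ k, (q k - p k) ^ 2 / ((1 - θ) * p k + θ * q k)

/-- `ρ` is a density matrix on `ℂ^d`. -/
def IsDensityMatrix {d : ℕ} (ρ : Matrix (Fin d) (Fin d) ℂ) : Prop :=
  ρ.PosSemidef ∧ ρ.trace = 1

/-- `(ρ i)_{i=1}^n` is a classical-quantum `ε`-differentially private `n`-tuple. -/
def IsCQDP {n d : ℕ} (ε : ℝ) (ρ : Fin n → Matrix (Fin d) (Fin d) ℂ) : Prop :=
  (∀ i, IsDensityMatrix (ρ i)) ∧ ∀ i j, (Real.exp ε • ρ j - ρ i).PosSemidef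

/-- `(ρ i)_{i=1}^n` lies in the essentially classical set `EC_n(ε)`. -/
def InEC {n d : ℕ} (ε : ℝ) (ρ : Fin n → Matrix (Fin d) (Fin d) ℂ) : Prop :=
  ∃ (m : ℕ) (p : Fin n → Fin m → ℝ) (σ : Fin m → Matrix (Fin d) (Fin d) ℂ),
    IsDP ε p ∧ (∀ k, IsDensityMatrix (σ k)) ∧ ∀ i, ρ i = ∑ k, (p i k : ℂ) • σ k

/-- Quantum RLD Fisher information `J_θ(ρ,σ) = Tr((σ−ρ)²((1−θ)ρ+θσ)⁻¹)`. -/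
def Jq {d : ℕ} (θ : ℝ) (ρ σ : Matrix (Fin d) (Fin d) ℂ) : ℝ :=
  (((σ - ρ) ^ 2 * ((1 - θ : ℂ) • ρ + (θ : ℂ) • σ)⁻¹).trace).re

/-- The function `f_θ(α,β) = (α−β)²/((1−θ)α+θβ)`. -/
def fTheta (θ α β : ℝ) : ℝ := (α - β) ^ 2 / ((1 - θ) * α + θ * β)

/-- `min_{i≠j} J_θ(p_i,p_j)` (classical). -/
def minPairsC {n d : ℕ} (θ : ℝ) (p : Fin n → Fin d → ℝ) : ℝ :=
  ⨅ ij : {q : Fin n × Fin n // q.1 ≠ q.2}, Jc θ (p ij.val.1) (p ij.val.2)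

/-- `min_{i≠j} J_θ(ρ_i,ρ_j)` (quantum). -/
def minPairsQ {n d : ℕ} (θ : ℝ) (ρ : Fin n → Matrix (Fin d) (Fin d) ℂ) : ℝ :=
  ⨅ ij : {q : Fin n × Fin n // q.1 ≠ q.2}, Jq θ (ρ ij.val.1) (ρ ij.val.2)

/-- `avg_{i≠j} J_θ(p_i,p_j)` (classical): arithmetic mean over ordered pairs `i ≠ j`. -/
def avgPairsC {n d : ℕ} (θ : ℝ) (p : Fin n → Fin d → ℝ) : ℝ :=
  (∑ i, ∑ j, if i ≠ j then Jc θ (p i) (p j) else 0) / ((n : ℝ) * ((n : ℝ) - 1))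

/-- `avg_{i≠j} J_θ(ρ_i,ρ_j)` (quantum): arithmetic mean over ordered pairs `i ≠ j`. -/
def avgPairsQ {n d : ℕ} (θ : ℝ) (ρ : Fin n → Matrix (Fin d) (Fin d) ℂ) : ℝ :=
  (∑ i, ∑ j, if i ≠ j then Jq θ (ρ i) (ρ j) else 0) / ((n : ℝ) * ((n : ℝ) - 1))

/-- `M_n^C(ε;J_θ)`: supremum of `min_{i≠j} J_θ(p_i,p_j)` over `ε`-DP `n`-tuples with
positive entries, over all dimensions `d`. -/
def MC (n : ℕ) (ε θ : ℝ) : ℝ :=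
  sSup {x : ℝ | ∃ (d : ℕ) (p : Fin n → Fin d → ℝ),
    IsDP ε p ∧ (∀ i k, 0 < p i k) ∧ x = minPairsC θ p}

/-- `M_n^EC(ε;J_θ)`: supremum of `min_{i≠j} J_θ(ρ_i,ρ_j)` over full-rank `n`-tuples in
`EC_n(ε)`, over all dimensions `d`. -/
def MEC (n : ℕ) (ε θ : ℝ) : ℝ :=
  sSup {x : ℝ | ∃ (d : ℕ) (ρ : Fin n → Matrix (Fin d) (Fin d) ℂ),
    InEC ε ρ ∧ (∀ i, (ρ i).PosDef) ∧ x = minPairsQ θ ρ}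

/-- `M_n^CQ(ε;J_θ)`: supremum of `min_{i≠j} J_θ(ρ_i,ρ_j)` over full-rank CQ `ε`-DP
`n`-tuples, over all dimensions `d`. -/
def MCQ (n : ℕ) (ε θ : ℝ) : ℝ :=
  sSup {x : ℝ | ∃ (d : ℕ) (ρ : Fin n → Matrix (Fin d) (Fin d) ℂ),
    IsCQDP ε ρ ∧ (∀ i, (ρ i).PosDef) ∧ x = minPairsQ θ ρ}

/-- `M_2^C(ε;J_θ)` as the supremum of `J_θ(p,q)` over `ε`-DP pairs with positive entries. -/
def M2C (ε θ : ℝ) : ℝ :=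
  sSup {x : ℝ | ∃ (d : ℕ) (p q : Fin d → ℝ),
    IsProbVec p ∧ IsProbVec q ∧ (∀ k, 0 < p k) ∧ (∀ k, 0 < q k) ∧
    (∀ k, p k ≤ Real.exp ε * q k ∧ q k ≤ Real.exp ε * p k) ∧
    x = Jc θ p q}

/-- `max_{1 ≤ k ≤ n/2} k(n−k)/(k e^ε + n − k)`. -/
def maxK (n : ℕ) (ε : ℝ) : ℝ :=
  sSup {x : ℝ | ∃ k : ℕ, 1 ≤ k ∧ 2 * k ≤ n ∧
    x = ((k : ℝ) * ((n : ℝ) - (k : ℝ))) / ((k : ℝ) * Real.exp ε + (n : ℝ) - (k : ℝ))}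


/-- `Ψ(p,q) = Σ_{k : p(k),q(k)>0} ψ(p(k),q(k))`. -/
def PsiSum {d : ℕ} (ψ : ℝ → ℝ → ℝ) (p q : Fin d → ℝ) : ℝ :=
  ∑ k, if 0 < p k ∧ 0 < q k then ψ (p k) (q k) else 0

section AuxStatement8
open Finset

private lemma psi_diag {ψ : ℝ → ℝ → ℝ}
    (hsmul : ∀ c a b : ℝ, 0 < c → 0 < a → 0 < b → ψ (c * a) (c * b) = c * ψ a b)
    (h11 : ψ 1 1 = 0) {x : ℝ} (hx : 0 < x) : ψ x x = 0 := by
  have := hsmul x 1 1 hx one_pos one_pos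
  rw [mul_one] at this
  rw [this, h11, mul_zero]

private lemma psi_K_nonneg {ψ : ℝ → ℝ → ℝ}
    (hadd : ∀ a b a' b' : ℝ, 0 < a → 0 < b → 0 < a' → 0 < b' →
      ψ (a + a') (b + b') ≤ ψ a b + ψ a' b')
    (hsmul : ∀ c a b : ℝ, 0 < c → 0 < a → 0 < b → ψ (c * a) (c * b) = c * ψ a b)
    (h11 : ψ 1 1 = 0) {S : ℝ} (hS : 0 < S) : 0 ≤ ψ S 1 + ψ 1 S := by
  have h1 := hadd S 1 1 S hS one_pos one_pos hS
  have h2 : ψ (S + 1) (1 + S) = 0 := by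
    rw [add_comm 1 S]
    exact psi_diag hsmul h11 (by linarith)
  linarith

private lemma twoval_sum {n : ℕ} {ψ : ℝ → ℝ → ℝ}
    (hsmul : ∀ c a b : ℝ, 0 < c → 0 < a → 0 < b → ψ (c * a) (c * b) = c * ψ a b)
    (h11 : ψ 1 1 = 0) {S c : ℝ} (hS : 0 < S) (hc : 0 < c)
    (B : Finset (Fin n)) (u : Fin n → ℝ) (hu : ∀ i, u i = if i ∈ B then c * S else c) :
    (∑ i, ∑ j, if i ≠ j then ψ (u i) (u j) else 0)
      = (B.card : ℝ) * (Bᶜ.card : ℝ) * c * (ψ S 1 + ψ 1 S) := by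
  have hcS : 0 < c * S := mul_pos hc hS
  have e1 : ψ (c * S) (c * S) = 0 := psi_diag hsmul h11 hcS
  have e2 : ψ c c = 0 := psi_diag hsmul h11 hc
  have e3 : ψ (c * S) c = c * ψ S 1 := by
    have := hsmul c S 1 hc hS one_pos; rwa [mul_one] at this
  have e4 : ψ c (c * S) = c * ψ 1 S := by
    have := hsmul c 1 S hc one_pos hS; rwa [mul_one] at this
  have hterm : ∀ i j : Fin n,
      (if i ≠ j then ψ (u i) (u j) else 0)
      = (if i ∈ B then (1:ℝ) else 0) * (if j ∈ Bᶜ then c * ψ S 1 else 0)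
        + (if i ∈ Bᶜ then (1:ℝ) else 0) * (if j ∈ B then c * ψ 1 S else 0) := by
    intro i j
    by_cases hij : i = j
    · subst hij
      by_cases hi : i ∈ B <;> simp [hi]
    · by_cases hi : i ∈ B <;> by_cases hj : j ∈ B <;>
        simp [hij, hi, hj, hu, e1, e2, e3, e4]
  have hBcard : (∑ i, if i ∈ B then (1:ℝ) else 0) = (B.card : ℝ) := by
    rw [Finset.sum_ite_mem, Finset.univ_inter, Finset.sum_const, nsmul_eq_mul, mul_one]
  have hBccard : (∑ i, if i ∈ Bᶜ then (1:ℝ) else 0) = (Bᶜ.card : ℝ) := by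
    rw [Finset.sum_ite_mem, Finset.univ_inter, Finset.sum_const, nsmul_eq_mul, mul_one]
  have hg1 : (∑ j, if j ∈ Bᶜ then c * ψ S 1 else 0) = (Bᶜ.card : ℝ) * (c * ψ S 1) := by
    rw [Finset.sum_ite_mem, Finset.univ_inter, Finset.sum_const, nsmul_eq_mul]
  have hg2 : (∑ j, if j ∈ B then c * ψ 1 S else 0) = (B.card : ℝ) * (c * ψ 1 S) := by
    rw [Finset.sum_ite_mem, Finset.univ_inter, Finset.sum_const, nsmul_eq_mul]
  calc (∑ i, ∑ j, if i ≠ j then ψ (u i) (u j) else 0)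
      = ∑ i, ((if i ∈ B then (1:ℝ) else 0) * ((Bᶜ.card : ℝ) * (c * ψ S 1))
          + (if i ∈ Bᶜ then (1:ℝ) else 0) * ((B.card : ℝ) * (c * ψ 1 S))) := by
        refine Finset.sum_congr rfl fun i _ => ?_
        rw [Finset.sum_congr rfl fun j _ => hterm i j, Finset.sum_add_distrib,
          ← Finset.mul_sum, ← Finset.mul_sum, hg1, hg2]
    _ = (B.card : ℝ) * ((Bᶜ.card : ℝ) * (c * ψ S 1))
          + (Bᶜ.card : ℝ) * ((B.card : ℝ) * (c * ψ 1 S)) := by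
        rw [Finset.sum_add_distrib, ← Finset.sum_mul, ← Finset.sum_mul, hBcard, hBccard]
    _ = (B.card : ℝ) * (Bᶜ.card : ℝ) * c * (ψ S 1 + ψ 1 S) := by ring

private lemma twoval_bound {n : ℕ} {ψ : ℝ → ℝ → ℝ}
    (hsmul : ∀ c a b : ℝ, 0 < c → 0 < a → 0 < b → ψ (c * a) (c * b) = c * ψ a b)
    (h11 : ψ 1 1 = 0) {S G c : ℝ} (hS : 1 < S) (hc : 0 < c)
    (hK : 0 ≤ ψ S 1 + ψ 1 S) (hG : 0 ≤ G)
    (hGk : ∀ k : ℕ, 1 ≤ k → k < n → (k:ℝ) * ((n:ℝ) - (k:ℝ)) ≤ G * ((k:ℝ) * S + (n:ℝ) - (k:ℝ)))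
    (B : Finset (Fin n)) (hB1 : B.Nonempty) (hB2 : B ≠ Finset.univ)
    (u : Fin n → ℝ) (hu : ∀ i, u i = if i ∈ B then c * S else c) :
    (∑ i, ∑ j, if i ≠ j then ψ (u i) (u j) else 0)
      ≤ (ψ S 1 + ψ 1 S) * G * (∑ i, u i) := by
  rw [twoval_sum hsmul h11 (by linarith : (0:ℝ) < S) hc B u hu]
  have hcard1 : 1 ≤ B.card := hB1.card_pos
  have hcardlt : B.card < n := by
    have := (Finset.card_lt_iff_ne_univ B).mpr hB2
    simpa using this
  have hcompl : (Bᶜ.card : ℝ) = (n:ℝ) - (B.card : ℝ) := by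
    rw [Finset.card_compl]
    have hle : B.card ≤ n := by omega
    push_cast [Nat.cast_sub hle, Fintype.card_fin]
    simp [Fintype.card_fin]
  have hsum : (∑ i, u i) = (B.card:ℝ) * (c * S) + ((n:ℝ) - (B.card:ℝ)) * c := by
    have : (∑ i, u i) = ∑ i, (if i ∈ B then c * S else c) :=
      Finset.sum_congr rfl fun i _ => hu i
    rw [this, Finset.sum_ite, Finset.sum_const, Finset.sum_const]
    have e1 : Finset.univ.filter (fun i => i ∈ B) = B := by ext i; simp
    have e2 : Finset.univ.filter (fun i => i ∉ B) = Bᶜ := by ext i; simp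
    rw [e1, e2, nsmul_eq_mul, nsmul_eq_mul, hcompl]
  rw [hsum, hcompl]
  have hkk := hGk B.card hcard1 hcardlt
  nlinarith [mul_le_mul_of_nonneg_right hkk (mul_nonneg hc.le hK)]


set_option maxHeartbeats 1000000 in
private lemma key_ineq {n : ℕ} (hn : 2 ≤ n) {ψ : ℝ → ℝ → ℝ} {S G : ℝ} (hS : 1 < S)
    (hadd : ∀ a b a' b' : ℝ, 0 < a → 0 < b → 0 < a' → 0 < b' →
      ψ (a + a') (b + b') ≤ ψ a b + ψ a' b')
    (hsmul : ∀ c a b : ℝ, 0 < c → 0 < a → 0 < b → ψ (c * a) (c * b) = c * ψ a b)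
    (h11 : ψ 1 1 = 0)
    (hK : 0 ≤ ψ S 1 + ψ 1 S) (hG : 0 ≤ G)
    (hGk : ∀ k : ℕ, 1 ≤ k → k < n → (k:ℝ) * ((n:ℝ) - (k:ℝ)) ≤ G * ((k:ℝ) * S + (n:ℝ) - (k:ℝ)))
    (N : ℕ) :
    ∀ t : Fin n → ℝ, (∀ i, 0 ≤ t i) → (∀ i j, t i ≤ S * t j) →
      ((Finset.univ.filter (fun i => ∃ j, t j < t i)).card ≤ N) →
      (∑ i, ∑ j, if i ≠ j then (if 0 < t i ∧ 0 < t j then ψ (t i) (t j) else 0) else 0)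
        ≤ (ψ S 1 + ψ 1 S) * G * ∑ i, t i := by
  induction N with
  | zero =>
    intro t ht0 hts hcard
    by_cases hzero : ∃ i, t i = 0
    · obtain ⟨i0, hi0⟩ := hzero
      have hall : ∀ i, t i = 0 := fun i =>
        le_antisymm (by have := hts i i0; rwa [hi0, mul_zero] at this) (ht0 i)
      have hL : (∑ i, ∑ j, if i ≠ j then (if 0 < t i ∧ 0 < t j then ψ (t i) (t j) else 0) else 0) = 0 := by
        apply Finset.sum_eq_zero; intro i _; apply Finset.sum_eq_zero; intro j _
        rw [hall i]; simp
      rw [hL]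
      have h0 : ∑ i, t i = 0 := by simp [hall]
      rw [h0, mul_zero]
    · push_neg at hzero
      have htpos : ∀ i, 0 < t i := fun i => (ht0 i).lt_of_ne (fun h => hzero i h.symm)
      -- with card = 0, the filter is empty, so all t i equal
      have hBempty : Finset.univ.filter (fun i => ∃ j, t j < t i) = ∅ :=
        Finset.card_eq_zero.mp (Nat.le_zero.mp hcard)
      have hall : ∀ i j : Fin n, t i = t j := by
        intro i j
        by_contra h
        rcases lt_or_gt_of_ne h with h' | h'
        · have : j ∈ Finset.univ.filter (fun i => ∃ j, t j < t i) := by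
            simp only [Finset.mem_filter, Finset.mem_univ, true_and]; exact ⟨i, h'⟩
          rw [hBempty] at this; exact absurd this (Finset.notMem_empty _)
        · have : i ∈ Finset.univ.filter (fun i => ∃ j, t j < t i) := by
            simp only [Finset.mem_filter, Finset.mem_univ, true_and]; exact ⟨j, h'⟩
          rw [hBempty] at this; exact absurd this (Finset.notMem_empty _)
      have hL : (∑ i, ∑ j, if i ≠ j then (if 0 < t i ∧ 0 < t j then ψ (t i) (t j) else 0) else 0) = 0 := by
        apply Finset.sum_eq_zero; intro i _; apply Finset.sum_eq_zero; intro j _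
        have : ψ (t i) (t j) = 0 := by
          rw [hall i j]; exact psi_diag hsmul h11 (htpos j)
        simp [this]
      rw [hL]
      exact mul_nonneg (mul_nonneg hK hG) (Finset.sum_nonneg fun i _ => ht0 i)
  | succ N ih =>
    intro t ht0 hts hcard
    by_cases hzero : ∃ i, t i = 0
    · obtain ⟨i0, hi0⟩ := hzero
      have hall : ∀ i, t i = 0 := fun i =>
        le_antisymm (by have := hts i i0; rwa [hi0, mul_zero] at this) (ht0 i)
      have hL : (∑ i, ∑ j, if i ≠ j then (if 0 < t i ∧ 0 < t j then ψ (t i) (t j) else 0) else 0) = 0 := by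
        apply Finset.sum_eq_zero; intro i _; apply Finset.sum_eq_zero; intro j _
        rw [hall i]; simp
      rw [hL]
      have h0 : ∑ i, t i = 0 := by simp [hall]
      rw [h0, mul_zero]
    · push_neg at hzero
      have htpos : ∀ i, 0 < t i := fun i => (ht0 i).lt_of_ne (fun h => hzero i h.symm)
      have hrw : (∑ i, ∑ j, if i ≠ j then (if 0 < t i ∧ 0 < t j then ψ (t i) (t j) else 0) else 0)
          = ∑ i, ∑ j, if i ≠ j then ψ (t i) (t j) else 0 := by
        refine Finset.sum_congr rfl fun i _ => Finset.sum_congr rfl fun j _ => ?_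
        simp [htpos i, htpos j]
      rw [hrw]
      have hne : (Finset.univ : Finset (Fin n)).Nonempty := ⟨⟨0, by omega⟩, Finset.mem_univ _⟩
      obtain ⟨i0, -, hi0⟩ := Finset.exists_mem_eq_inf' hne t
      set m := Finset.univ.inf' hne t with hmdef
      have hmle : ∀ i, m ≤ t i := fun i => Finset.inf'_le _ (Finset.mem_univ i)
      have hmpos : 0 < m := hi0 ▸ htpos i0
      set B := Finset.univ.filter (fun i => ∃ j, t j < t i) with hBdef
      have hBiff : ∀ i, i ∈ B ↔ m < t i := by
        intro i
        rw [hBdef, Finset.mem_filter]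
        simp only [Finset.mem_univ, true_and]
        constructor
        · rintro ⟨j, hj⟩; exact (hmle j).trans_lt hj
        · intro h; exact ⟨i0, by rw [← hi0]; exact h⟩
      have hi0B : i0 ∉ B := by rw [hBiff, ← hi0]; exact lt_irrefl m
      by_cases hBe : B = ∅
      · -- all equal to m
        have hall : ∀ i, t i = m := by
          intro i
          refine le_antisymm ?_ (hmle i)
          by_contra h
          have : i ∈ B := (hBiff i).mpr (lt_of_not_ge fun h' => h (h'.trans (le_refl _)))
          rw [hBe] at this; exact absurd this (Finset.notMem_empty _)
        have hL : (∑ i, ∑ j, if i ≠ j then ψ (t i) (t j) else 0) = 0 := by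
          apply Finset.sum_eq_zero; intro i _; apply Finset.sum_eq_zero; intro j _
          have : ψ (t i) (t j) = 0 := by
            rw [hall i, hall j]; exact psi_diag hsmul h11 hmpos
          simp [this]
        rw [hL]
        exact mul_nonneg (mul_nonneg hK hG) (Finset.sum_nonneg fun i _ => ht0 i)
      · have hBne : B.Nonempty := Finset.nonempty_of_ne_empty hBe
        have hBnu : B ≠ Finset.univ := fun h => hi0B (h ▸ Finset.mem_univ i0)
        have hS0 : (0:ℝ) < S - 1 := by linarith
        obtain ⟨i1, hi1B, hi1⟩ := Finset.exists_mem_eq_inf' hBne (fun i => (t i - m) / (S - 1))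
        set c := B.inf' hBne (fun i => (t i - m) / (S - 1)) with hcdef
        have hcpos : 0 < c := by
          rw [hcdef]
          rw [Finset.lt_inf'_iff]
          intro i hi
          exact div_pos (by linarith [(hBiff i).mp hi]) hS0
        have hcle : ∀ i ∈ B, c * (S - 1) ≤ t i - m := by
          intro i hi
          have := Finset.inf'_le (fun i => (t i - m) / (S - 1)) hi
          rw [← hcdef] at this
          rw [← le_div_iff₀ hS0]
          exact this
        have hcm : c ≤ m := by
          have h1 : t i1 ≤ S * m := by
            have := hts i1 i0
            rwa [← hi0] at this
          rw [hi1, div_le_iff₀ hS0]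
          nlinarith
        set u : Fin n → ℝ := fun i => if i ∈ B then c * S else c with hudef
        have hu : ∀ i, u i = if i ∈ B then c * S else c := fun i => rfl
        set v : Fin n → ℝ := fun i => t i - u i with hvdef
        have hv : ∀ i, v i = t i - u i := fun i => rfl
        have huv : ∀ i, t i = u i + v i := fun i => by rw [hv]; ring
        have hupos : ∀ i, 0 < u i := by
          intro i
          rw [hu]
          split
          · exact mul_pos hcpos (by linarith)
          · exact hcpos
        have htm : ∀ i, i ∉ B → t i = m := by
          intro i hi
          refine le_antisymm ?_ (hmle i)
          by_contra h
          exact hi ((hBiff i).mpr (lt_of_not_ge h))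
        have hvlb : ∀ i, m - c ≤ v i := by
          intro i
          rw [hv, hu]
          by_cases hi : i ∈ B
          · rw [if_pos hi]
            have := hcle i hi
            nlinarith
          · rw [if_neg hi, htm i hi]
        have hvub : ∀ i, v i ≤ S * (m - c) := by
          intro i
          rw [hv, hu]
          by_cases hi : i ∈ B
          · rw [if_pos hi]
            have h1 : t i ≤ S * m := by
              have := hts i i0; rwa [← hi0] at this
            nlinarith
          · rw [if_neg hi, htm i hi]
            nlinarith
        have hvratio : ∀ i j, v i ≤ S * v j := by
          intro i j
          have h1 := hvub i
          have h2 := hvlb j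
          nlinarith
        have hvnn : ∀ i, 0 ≤ v i := fun i => le_trans (by linarith) (hvlb i)
        have hU : (∑ i, ∑ j, if i ≠ j then ψ (u i) (u j) else 0)
            ≤ (ψ S 1 + ψ 1 S) * G * (∑ i, u i) :=
          twoval_bound hsmul h11 hS hcpos hK hG hGk B hBne hBnu u hu
        have hsumt : ∑ i, t i = (∑ i, u i) + (∑ i, v i) := by
          rw [← Finset.sum_add_distrib]
          exact Finset.sum_congr rfl fun i _ => huv i
        by_cases hmc : m - c = 0
        · -- v ≡ 0, t = u
          have hv0 : ∀ i, v i = 0 := by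
            intro i
            refine le_antisymm ?_ (hvnn i)
            have := hvub i
            rw [hmc, mul_zero] at this
            exact this
          have htu : ∀ i, t i = u i := fun i => by rw [huv i, hv0, add_zero]
          calc (∑ i, ∑ j, if i ≠ j then ψ (t i) (t j) else 0)
              = (∑ i, ∑ j, if i ≠ j then ψ (u i) (u j) else 0) := by
                refine Finset.sum_congr rfl fun i _ => Finset.sum_congr rfl fun j _ => ?_
                rw [htu i, htu j]
            _ ≤ (ψ S 1 + ψ 1 S) * G * (∑ i, u i) := hU
            _ = (ψ S 1 + ψ 1 S) * G * (∑ i, t i) := by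
                congr 1
                exact (Finset.sum_congr rfl fun i _ => (htu i).symm)
        · have hmcpos : 0 < m - c := lt_of_le_of_ne (by linarith) (Ne.symm hmc)
          have hvpos : ∀ i, 0 < v i := fun i => lt_of_lt_of_le hmcpos (hvlb i)
          -- measure decreases
          have hvi1 : v i1 = m - c := by
            have h1 : t i1 - m = c * (S - 1) := by
              rw [hi1]
              field_simp
            rw [hv, hu, if_pos hi1B]
            nlinarith
          have hcard_v : (Finset.univ.filter (fun i => ∃ j, v j < v i)).card ≤ N := by
            have hsub : (Finset.univ.filter (fun i => ∃ j, v j < v i)) ⊆ B.erase i1 := by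
              intro i hi
              rw [Finset.mem_filter] at hi
              obtain ⟨-, j, hj⟩ := hi
              have hvi : m - c < v i := lt_of_le_of_lt (hvlb j) hj
              rw [Finset.mem_erase]
              constructor
              · rintro rfl
                rw [hvi1] at hvi
                exact lt_irrefl _ hvi
              · by_contra hiB
                have : v i = m - c := by
                  rw [hv, hu, if_neg hiB, htm i hiB]
                rw [this] at hvi
                exact lt_irrefl _ hvi
            have h1 : (Finset.univ.filter (fun i => ∃ j, v j < v i)).card ≤ (B.erase i1).card :=
              Finset.card_le_card hsub
            have h2 : (B.erase i1).card = B.card - 1 := Finset.card_erase_of_mem hi1B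
            have h3 : B.card ≤ N + 1 := hcard
            omega
          have hV := ih v (fun i => (hvpos i).le) hvratio hcard_v
          have hVrw : (∑ i, ∑ j, if i ≠ j then (if 0 < v i ∧ 0 < v j then ψ (v i) (v j) else 0) else 0)
              = (∑ i, ∑ j, if i ≠ j then ψ (v i) (v j) else 0) := by
            refine Finset.sum_congr rfl fun i _ => Finset.sum_congr rfl fun j _ => ?_
            simp [hvpos i, hvpos j]
          rw [hVrw] at hV
          have hsplit : (∑ i, ∑ j, if i ≠ j then ψ (t i) (t j) else 0)
              ≤ (∑ i, ∑ j, if i ≠ j then ψ (u i) (u j) else 0)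
                + (∑ i, ∑ j, if i ≠ j then ψ (v i) (v j) else 0) := by
            rw [← Finset.sum_add_distrib]
            refine Finset.sum_le_sum fun i _ => ?_
            rw [← Finset.sum_add_distrib]
            refine Finset.sum_le_sum fun j _ => ?_
            by_cases hij : i = j
            · simp [hij]
            · rw [if_pos hij, if_pos hij, if_pos hij]
              rw [huv i, huv j]
              exact hadd (u i) (u j) (v i) (v j) (hupos i) (hupos j) (hvpos i) (hvpos j)
          rw [hsumt, mul_add]
          linarith


private lemma card_filter_mem_powersetCard {α : Type*} [DecidableEq α] (s : Finset α) (x : α)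
    (hx : x ∈ s) (k : ℕ) :
    ((Finset.powersetCard (k+1) s).filter (fun A => x ∈ A)).card
      = (Finset.powersetCard k (s.erase x)).card := by
  apply Finset.card_bij' (fun A _ => A.erase x) (fun B _ => insert x B)
  · intro A hA
    rw [Finset.mem_filter] at hA
    exact Finset.insert_erase hA.2
  · intro B hB
    rw [Finset.mem_powersetCard] at hB
    have hxB : x ∉ B := fun h => (Finset.mem_erase.mp (hB.1 h)).1 rfl
    exact Finset.erase_insert hxB
  · intro A hA
    rw [Finset.mem_filter, Finset.mem_powersetCard] at hA
    obtain ⟨⟨hsub, hcard⟩, hmem⟩ := hA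
    rw [Finset.mem_powersetCard]
    exact ⟨Finset.erase_subset_erase x hsub, by rw [Finset.card_erase_of_mem hmem, hcard]; omega⟩
  · intro B hB
    rw [Finset.mem_powersetCard] at hB
    obtain ⟨hsub, hcard⟩ := hB
    have hxB : x ∉ B := fun h => (Finset.mem_erase.mp (hsub h)).1 rfl
    rw [Finset.mem_filter, Finset.mem_powersetCard]
    refine ⟨⟨?_, ?_⟩, Finset.mem_insert_self x B⟩
    · intro y hy
      rcases Finset.mem_insert.mp hy with rfl | hy'
      · exact hx
      · exact Finset.mem_of_mem_erase (hsub hy')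
    · rw [Finset.card_insert_of_notMem hxB, hcard]

private lemma filter_not_mem_powersetCard {α : Type*} [DecidableEq α] (s : Finset α) (x : α) (k : ℕ) :
    (Finset.powersetCard k s).filter (fun A => x ∉ A) = Finset.powersetCard k (s.erase x) := by
  ext A
  simp only [Finset.mem_filter, Finset.mem_powersetCard, Finset.subset_erase]
  tauto

set_option maxHeartbeats 1000000 in
private lemma construction {n : ℕ} (hn : 2 ≤ n) (ψ : ℝ → ℝ → ℝ)
    (hsmul : ∀ c a b : ℝ, 0 < c → 0 < a → 0 < b → ψ (c * a) (c * b) = c * ψ a b)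
    (h11 : ψ 1 1 = 0) (ε : ℝ) (hε : 0 < ε) (k : ℕ) (hk1 : 1 ≤ k) (hk2 : 2 * k ≤ n) :
    ∃ (d : ℕ) (p : Fin n → Fin d → ℝ), IsDP ε p ∧
      ∀ i j : Fin n, i ≠ j → PsiSum ψ (p i) (p j) =
        (ψ (Real.exp ε) 1 + ψ 1 (Real.exp ε)) / ((n:ℝ) - 1) *
          (((k : ℝ) * ((n : ℝ) - (k : ℝ))) / ((k : ℝ) * Real.exp ε + (n : ℝ) - (k : ℝ))) := by
  obtain ⟨k', rfl⟩ : ∃ k', k = k' + 1 := ⟨k - 1, by omega⟩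
  set S := Real.exp ε with hSdef
  have hS1 : 1 < S := Real.one_lt_exp_iff.mpr hε
  have hS0 : 0 < S := by linarith
  set N₁ := (n-1).choose k' with hN₁
  set N₂ := (n-1).choose (k'+1) with hN₂
  set N₃ := (n-2).choose k' with hN₃
  have hN₁pos : 0 < N₁ := Nat.choose_pos (by omega)
  have hN₃pos : 0 < N₃ := Nat.choose_pos (by omega)
  set D : ℝ := S * N₁ + N₂ with hD
  have hDpos : 0 < D := by
    have h1 : (1:ℝ) ≤ (N₁ : ℝ) := by exact_mod_cast hN₁pos
    have h2 : (0:ℝ) ≤ (N₂ : ℝ) := Nat.cast_nonneg _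
    nlinarith
  have hDne : D ≠ 0 := hDpos.ne'
  set c : ℝ := D⁻¹ with hc
  have hcpos : 0 < c := inv_pos.mpr hDpos
  have hcS : 0 < c * S := mul_pos hcpos hS0
  set q : Fin n → Finset (Fin n) → ℝ :=
    fun i A => if A.card = k' + 1 then (if i ∈ A then c * S else c) else 0 with hq
  have hqdef : ∀ i A, q i A = if A.card = k' + 1 then (if i ∈ A then c * S else c) else 0 :=
    fun i A => rfl
  have hcardeq : Fintype.card (Finset (Fin n)) = 2^n := by
    simp [Fintype.card_finset]
  set eqv : Finset (Fin n) ≃ Fin (2^n) := Fintype.equivFinOfCardEq hcardeq with heqv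
  set p : Fin n → Fin (2^n) → ℝ := fun i a => q i (eqv.symm a) with hpdef
  refine ⟨2^n, p, ?_, ?_⟩
  · -- IsDP
    constructor
    · intro i
      constructor
      · intro a
        simp only [hpdef]
        rw [hqdef]
        split
        · split
          · exact hcS.le
          · exact hcpos.le
        · exact le_refl 0
      · -- sum = 1
        simp only [hpdef]
        rw [Equiv.sum_comp eqv.symm (q i)]
        have e0 : ∀ A : Finset (Fin n), q i A
            = if A ∈ Finset.powersetCard (k'+1) Finset.univ then (if i ∈ A then c * S else c) else 0 := by
          intro A
          rw [hqdef]
          by_cases hA : A.card = k' + 1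
          · rw [if_pos hA, if_pos (Finset.mem_powersetCard_univ.mpr hA)]
          · rw [if_neg hA, if_neg (fun h => hA (Finset.mem_powersetCard_univ.mp h))]
        rw [Finset.sum_congr rfl fun A _ => e0 A, ← Finset.sum_filter,
          Finset.filter_mem_eq_inter, Finset.univ_inter, Finset.sum_ite,
          Finset.sum_const, Finset.sum_const]
        have hc1 : ((Finset.powersetCard (k'+1) (Finset.univ : Finset (Fin n))).filter (fun A => i ∈ A)).card = N₁ := by
          rw [card_filter_mem_powersetCard Finset.univ i (Finset.mem_univ i) k',
            Finset.card_powersetCard, Finset.card_erase_of_mem (Finset.mem_univ i),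
            Finset.card_univ, Fintype.card_fin]
        have hc2 : ((Finset.powersetCard (k'+1) (Finset.univ : Finset (Fin n))).filter (fun A => i ∉ A)).card = N₂ := by
          rw [filter_not_mem_powersetCard, Finset.card_powersetCard,
            Finset.card_erase_of_mem (Finset.mem_univ i), Finset.card_univ, Fintype.card_fin]
        rw [hc1, hc2, nsmul_eq_mul, nsmul_eq_mul, hc]
        field_simp
        rw [hD]
        ring
    · -- DP inequality
      intro i j a
      simp only [hpdef]
      rw [hqdef, hqdef, ← hSdef]
      by_cases hA : (eqv.symm a).card = k' + 1
      · by_cases hiA : i ∈ eqv.symm a <;> by_cases hjA : j ∈ eqv.symm a <;>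
          simp only [hA, hiA, hjA, if_true, if_false, if_pos, if_neg, not_false_iff] <;>
          nlinarith [hcpos, hS1, hcS]
      · simp [hA]
  · -- pair values
    intro i j hij
    have e3 : ψ (c * S) c = c * ψ S 1 := by
      have := hsmul c S 1 hcpos hS0 one_pos; rwa [mul_one] at this
    have e4 : ψ c (c * S) = c * ψ 1 S := by
      have := hsmul c 1 S hcpos one_pos hS0; rwa [mul_one] at this
    have e1 : ψ (c * S) (c * S) = 0 := by
      have := hsmul (c*S) 1 1 hcS one_pos one_pos
      rw [mul_one] at this
      rw [this, h11, mul_zero]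
    have e2 : ψ c c = 0 := by
      have := hsmul c 1 1 hcpos one_pos one_pos
      rw [mul_one] at this
      rw [this, h11, mul_zero]
    have hsumc : (∑ a : Fin (2^n), if 0 < q i (eqv.symm a) ∧ 0 < q j (eqv.symm a)
            then ψ (q i (eqv.symm a)) (q j (eqv.symm a)) else 0)
        = ∑ A : Finset (Fin n), (if 0 < q i A ∧ 0 < q j A then ψ (q i A) (q j A) else 0) :=
      Equiv.sum_comp eqv.symm (fun A => if 0 < q i A ∧ 0 < q j A then ψ (q i A) (q j A) else 0)
    rw [PsiSum]
    simp only [hpdef]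
    rw [hsumc]
    have hterm : ∀ A : Finset (Fin n),
        (if 0 < q i A ∧ 0 < q j A then ψ (q i A) (q j A) else 0)
        = (if A.card = k'+1 ∧ i ∈ A ∧ j ∉ A then c * ψ S 1 else 0)
          + (if A.card = k'+1 ∧ j ∈ A ∧ i ∉ A then c * ψ 1 S else 0) := by
      intro A
      rw [hqdef, hqdef]
      by_cases hA : A.card = k' + 1
      · by_cases hiA : i ∈ A <;> by_cases hjA : j ∈ A <;>
          simp [hA, hiA, hjA, hcpos, hcS, e1, e2, e3, e4]
      · simp [hA]
    rw [Finset.sum_congr rfl fun A _ => hterm A, Finset.sum_add_distrib]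
    have hcount : ∀ (x y : Fin n), x ≠ y →
        (Finset.univ.filter (fun A : Finset (Fin n) => A.card = k'+1 ∧ x ∈ A ∧ y ∉ A)).card = N₃ := by
      intro x y hxy
      have hfe : (Finset.univ.filter (fun A : Finset (Fin n) => A.card = k'+1 ∧ x ∈ A ∧ y ∉ A))
          = ((Finset.powersetCard (k'+1) (Finset.univ.erase y)).filter (fun A => x ∈ A)) := by
        ext A
        simp only [Finset.mem_filter, Finset.mem_univ, true_and, Finset.mem_powersetCard,
          Finset.subset_erase, Finset.subset_univ, true_and, Finset.mem_powersetCard_univ]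
        tauto
      rw [hfe, card_filter_mem_powersetCard (Finset.univ.erase y) x
          (Finset.mem_erase.mpr ⟨hxy, Finset.mem_univ x⟩) k',
        Finset.card_powersetCard, Finset.card_erase_of_mem
          (Finset.mem_erase.mpr ⟨hxy, Finset.mem_univ x⟩),
        Finset.card_erase_of_mem (Finset.mem_univ y), Finset.card_univ, Fintype.card_fin,
        hN₃]
      congr 1
    rw [← Finset.sum_filter, ← Finset.sum_filter, Finset.sum_const, Finset.sum_const,
      hcount i j hij, hcount j i (Ne.symm hij), nsmul_eq_mul, nsmul_eq_mul]
    -- now arithmetic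
    have hid0 : (n-1) * N₃ = N₂ * (k'+1) := by
      have h := Nat.add_one_mul_choose_eq (n-2) k'
      have hn2 : n - 2 + 1 = n - 1 := by omega
      rw [hn2] at h
      rw [hN₃, hN₂]
      rw [h]
    have hid0' : N₂ * (k'+1) = N₁ * ((n-1) - k') := by
      have h := Nat.choose_succ_right_eq (n-1) k'
      rw [← hN₁, ← hN₂] at h
      exact h
    have hid1R : ((n:ℝ) - 1) * (N₃ : ℝ) = (N₂ : ℝ) * ((k' : ℝ) + 1) := by
      have h := congrArg (fun x : ℕ => (x : ℝ)) hid0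
      push_cast [Nat.cast_sub (by omega : 1 ≤ n)] at h
      linear_combination h
    have hid2R : (N₂ : ℝ) * ((k' : ℝ) + 1) = (N₁ : ℝ) * ((n : ℝ) - ((k' : ℝ) + 1)) := by
      have h := congrArg (fun x : ℕ => (x : ℝ)) hid0'
      push_cast [Nat.cast_sub (by omega : 1 ≤ n), Nat.cast_sub (by omega : k' ≤ n - 1)] at h
      linear_combination h
    have hn1pos : (0:ℝ) < (n:ℝ) - 1 := by
      have : (2:ℝ) ≤ (n:ℝ) := by exact_mod_cast hn
      linarith
    have hdenpos : (0:ℝ) < ((k'+1 : ℕ) : ℝ) * S + (n : ℝ) - ((k'+1 : ℕ) : ℝ) := by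
      have h1 : (1:ℝ) ≤ ((k'+1 : ℕ) : ℝ) := by exact_mod_cast Nat.one_le_iff_ne_zero.mpr (by omega)
      have h2 : ((k'+1 : ℕ) : ℝ) ≤ (n:ℝ) := by exact_mod_cast (by omega : k' + 1 ≤ n)
      nlinarith
    have hK' : (N₃ : ℝ) * (c * ψ S 1) + (N₃ : ℝ) * (c * ψ 1 S)
        = ((N₃ : ℝ) * (ψ S 1 + ψ 1 S)) / D := by
      rw [hc, div_eq_mul_inv]; ring
    rw [hK', div_mul_div_comm,
      div_eq_div_iff hDne (by nlinarith [mul_pos hn1pos hdenpos] :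
        ((n:ℝ) - 1) * (((k'+1 : ℕ) : ℝ) * S + (n : ℝ) - ((k'+1 : ℕ) : ℝ)) ≠ 0),
      hD]
    push_cast
    push_cast at hid1R hid2R
    linear_combination ((ψ S 1 + ψ 1 S) * S * ((k':ℝ)+1) + (ψ S 1 + ψ 1 S) * ((n:ℝ) - ((k':ℝ)+1))) * hid1R
      + ((ψ S 1 + ψ 1 S) * S * ((k':ℝ)+1)) * hid2R


end AuxStatement8

set_option maxHeartbeats 1000000 in
/-- for sublinear `ψ : (0,∞)² → ℝ` with `ψ(1,1)=0`, the supremum over `ε`-DP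
`n`-tuples of `min_{i≠j} Ψ(p_i,p_j)` equals the supremum of `avg_{i≠j} Ψ(p_i,p_j)`, and both
equal `((ψ(e^ε,1)+ψ(1,e^ε))/(n−1)) · max_{1 ≤ k ≤ n/2} k(n−k)/(k e^ε + n − k)`. -/
theorem statement8 (ψ : ℝ → ℝ → ℝ)
    (hadd : ∀ a b a' b' : ℝ, 0 < a → 0 < b → 0 < a' → 0 < b' →
      ψ (a + a') (b + b') ≤ ψ a b + ψ a' b')
    (hsmul : ∀ c a b : ℝ, 0 < c → 0 < a → 0 < b → ψ (c * a) (c * b) = c * ψ a b)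
    (h11 : ψ 1 1 = 0)
    (ε : ℝ) (hε : 0 < ε) (n : ℕ) (hn : 2 ≤ n) :
    sSup {x : ℝ | ∃ (d : ℕ) (p : Fin n → Fin d → ℝ), IsDP ε p ∧
        x = ⨅ ij : {q : Fin n × Fin n // q.1 ≠ q.2}, PsiSum ψ (p ij.val.1) (p ij.val.2)}
      = sSup {x : ℝ | ∃ (d : ℕ) (p : Fin n → Fin d → ℝ), IsDP ε p ∧
        x = (∑ i, ∑ j, if i ≠ j then PsiSum ψ (p i) (p j) else 0) /
          ((n : ℝ) * ((n : ℝ) - 1))} ∧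
    sSup {x : ℝ | ∃ (d : ℕ) (p : Fin n → Fin d → ℝ), IsDP ε p ∧
        x = ⨅ ij : {q : Fin n × Fin n // q.1 ≠ q.2}, PsiSum ψ (p ij.val.1) (p ij.val.2)}
      = (ψ (Real.exp ε) 1 + ψ 1 (Real.exp ε)) / ((n : ℝ) - 1) * maxK n ε := by
  classical
  have hS1 : 1 < Real.exp ε := Real.one_lt_exp_iff.mpr hε
  have hS0 : 0 < Real.exp ε := by linarith
  have hK0 : 0 ≤ ψ (Real.exp ε) 1 + ψ 1 (Real.exp ε) := psi_K_nonneg hadd hsmul h11 hS0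
  have hn1pos : (0:ℝ) < (n:ℝ) - 1 := by
    have : (2:ℝ) ≤ (n:ℝ) := by exact_mod_cast hn
    linarith
  have hnpos : (0:ℝ) < (n:ℝ) := by linarith
  have hnn1 : (0:ℝ) < (n:ℝ) * ((n:ℝ) - 1) := mul_pos hnpos hn1pos
  haveI hNE : Nonempty {q : Fin n × Fin n // q.1 ≠ q.2} := by
    refine ⟨⟨(⟨0, by omega⟩, ⟨1, by omega⟩), ?_⟩⟩
    simp [Fin.ext_iff]
  -- maxK facts
  set Kset : Set ℝ := {x : ℝ | ∃ k : ℕ, 1 ≤ k ∧ 2 * k ≤ n ∧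
      x = ((k : ℝ) * ((n : ℝ) - (k : ℝ))) / ((k : ℝ) * Real.exp ε + (n : ℝ) - (k : ℝ))}
    with hKset
  have hGdef : maxK n ε = sSup Kset := rfl
  have hsetfin : Kset.Finite := by
    apply Set.Finite.subset (Set.Finite.image
      (fun k : ℕ => ((k : ℝ) * ((n : ℝ) - (k : ℝ))) / ((k : ℝ) * Real.exp ε + (n : ℝ) - (k : ℝ)))
      (Set.finite_Icc 1 n))
    rw [hKset]
    rintro x ⟨k, h1, h2, rfl⟩
    exact ⟨k, by simp [Set.mem_Icc]; omega, rfl⟩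
  have hsetne : Kset.Nonempty := by
    rw [hKset]
    exact ⟨_, 1, le_refl 1, by omega, rfl⟩
  have hGle : ∀ k : ℕ, 1 ≤ k → 2 * k ≤ n →
      ((k : ℝ) * ((n : ℝ) - (k : ℝ))) / ((k : ℝ) * Real.exp ε + (n : ℝ) - (k : ℝ)) ≤ maxK n ε := by
    intro k h1 h2
    rw [hGdef]
    exact le_csSup hsetfin.bddAbove ⟨k, h1, h2, rfl⟩
  obtain ⟨k₀, hk₀1, hk₀2, hGk₀⟩ : ∃ k : ℕ, 1 ≤ k ∧ 2 * k ≤ n ∧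
      maxK n ε = ((k : ℝ) * ((n : ℝ) - (k : ℝ))) / ((k : ℝ) * Real.exp ε + (n : ℝ) - (k : ℝ)) := by
    have h := hsetne.csSup_mem hsetfin
    rw [← hGdef] at h
    rw [hKset] at h
    obtain ⟨k, h1, h2, h3⟩ := h
    exact ⟨k, h1, h2, h3⟩
  have hden : ∀ k : ℕ, k ≤ n → (0:ℝ) < (k : ℝ) * Real.exp ε + (n : ℝ) - (k : ℝ) := by
    intro k hk
    have h2 : ((k:ℝ)) ≤ (n:ℝ) := by exact_mod_cast hk
    have h3 : (0:ℝ) ≤ (k:ℝ) := Nat.cast_nonneg k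
    nlinarith
  have hG0 : 0 ≤ maxK n ε := by
    refine le_trans ?_ (hGle 1 (le_refl 1) hn)
    apply div_nonneg
    · push_cast
      nlinarith
    · exact (hden 1 (by omega)).le
  have hGk : ∀ k : ℕ, 1 ≤ k → k < n →
      (k:ℝ) * ((n:ℝ) - (k:ℝ)) ≤ maxK n ε * ((k:ℝ) * Real.exp ε + (n:ℝ) - (k:ℝ)) := by
    intro k h1 h2
    rcases le_or_gt (2*k) n with h3 | h3
    · have h := hGle k h1 h3
      rw [div_le_iff₀ (hden k (by omega))] at h
      exact h
    · have h1' : 1 ≤ n - k := by omega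
      have h3' : 2 * (n - k) ≤ n := by omega
      have h := hGle (n-k) h1' h3'
      rw [div_le_iff₀ (hden (n-k) (by omega))] at h
      have hc : ((n - k : ℕ) : ℝ) = (n:ℝ) - (k:ℝ) := by
        rw [Nat.cast_sub (by omega : k ≤ n)]
      rw [hc] at h
      have h2c : (n:ℝ) < 2 * (k:ℝ) := by exact_mod_cast h3
      nlinarith [mul_nonneg hG0 (mul_nonneg
        (by linarith : (0:ℝ) ≤ 2*(k:ℝ) - (n:ℝ)) (by linarith : (0:ℝ) ≤ Real.exp ε - 1))]
  -- upper bound for the total pair sum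
  have hub : ∀ (d : ℕ) (p : Fin n → Fin d → ℝ), IsDP ε p →
      (∑ i, ∑ j, if i ≠ j then PsiSum ψ (p i) (p j) else 0)
        ≤ (ψ (Real.exp ε) 1 + ψ 1 (Real.exp ε)) * maxK n ε * (n:ℝ) := by
    intro d p hp
    have h1 : ∀ i j : Fin n, (if i ≠ j then PsiSum ψ (p i) (p j) else 0)
        = ∑ kk : Fin d, (if i ≠ j then
            (if 0 < p i kk ∧ 0 < p j kk then ψ (p i kk) (p j kk) else 0) else 0) := by
      intro i j
      by_cases hij : i ≠ j
      · rw [if_pos hij]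
        rw [Finset.sum_congr rfl fun kk _ => if_pos hij]
        rfl
      · rw [if_neg hij]
        rw [Finset.sum_congr rfl fun kk _ => if_neg hij]
        simp
    rw [Finset.sum_congr rfl fun i _ => Finset.sum_congr rfl fun j _ => h1 i j]
    rw [Finset.sum_congr rfl fun i (_ : i ∈ Finset.univ) => Finset.sum_comm]
    rw [Finset.sum_comm]
    have hper : ∀ kk : Fin d, (∑ i, ∑ j, if i ≠ j then
        (if 0 < p i kk ∧ 0 < p j kk then ψ (p i kk) (p j kk) else 0) else 0)
        ≤ (ψ (Real.exp ε) 1 + ψ 1 (Real.exp ε)) * maxK n ε * (∑ i, p i kk) := by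
      intro kk
      exact key_ineq hn hS1 hadd hsmul h11 hK0 hG0 hGk n (fun i => p i kk)
        (fun i => (hp.1 i).1 kk) (fun i j => hp.2 i j kk)
        (le_trans (Finset.card_filter_le _ _) (by simp))
    calc (∑ kk : Fin d, ∑ i, ∑ j, if i ≠ j then
          (if 0 < p i kk ∧ 0 < p j kk then ψ (p i kk) (p j kk) else 0) else 0)
        ≤ ∑ kk : Fin d, (ψ (Real.exp ε) 1 + ψ 1 (Real.exp ε)) * maxK n ε * (∑ i, p i kk) :=
          Finset.sum_le_sum fun kk _ => hper kk
      _ = (ψ (Real.exp ε) 1 + ψ 1 (Real.exp ε)) * maxK n ε * ∑ kk : Fin d, ∑ i, p i kk := by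
          rw [Finset.mul_sum]
      _ = (ψ (Real.exp ε) 1 + ψ 1 (Real.exp ε)) * maxK n ε * (n:ℝ) := by
          rw [Finset.sum_comm]
          rw [Finset.sum_congr rfl fun i (_ : i ∈ Finset.univ) => (hp.1 i).2]
          simp
  have havgle : ∀ (d : ℕ) (p : Fin n → Fin d → ℝ), IsDP ε p →
      (∑ i, ∑ j, if i ≠ j then PsiSum ψ (p i) (p j) else 0) / ((n : ℝ) * ((n : ℝ) - 1))
        ≤ (ψ (Real.exp ε) 1 + ψ 1 (Real.exp ε)) / ((n:ℝ) - 1) * maxK n ε := by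
    intro d p hp
    rw [div_le_iff₀ hnn1]
    refine le_trans (hub d p hp) (le_of_eq ?_)
    field_simp
  have hconstsum : ∀ x : ℝ, (∑ i : Fin n, ∑ j : Fin n, if i ≠ j then x else 0)
      = (n:ℝ) * ((n:ℝ) - 1) * x := by
    intro x
    have h1 : ∀ i : Fin n, (∑ j : Fin n, if i ≠ j then x else 0) = (n:ℝ) * x - x := by
      intro i
      have h2 : (∑ j : Fin n, if i ≠ j then x else 0)
          = ∑ j : Fin n, (x - if i = j then x else 0) := by
        refine Finset.sum_congr rfl fun j _ => ?_
        by_cases h : i = j <;> simp [h]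
      rw [h2, Finset.sum_sub_distrib, Finset.sum_const, Finset.sum_ite_eq,
        if_pos (Finset.mem_univ i), Finset.card_univ, Fintype.card_fin, nsmul_eq_mul]
    rw [Finset.sum_congr rfl fun i _ => h1 i, Finset.sum_const, Finset.card_univ,
      Fintype.card_fin, nsmul_eq_mul]
    ring
  have hminle : ∀ (d : ℕ) (p : Fin n → Fin d → ℝ), IsDP ε p →
      (⨅ ij : {q : Fin n × Fin n // q.1 ≠ q.2}, PsiSum ψ (p ij.val.1) (p ij.val.2))
        ≤ (ψ (Real.exp ε) 1 + ψ 1 (Real.exp ε)) / ((n:ℝ) - 1) * maxK n ε := by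
    intro d p hp
    have hbdd : BddBelow (Set.range fun ij : {q : Fin n × Fin n // q.1 ≠ q.2} =>
        PsiSum ψ (p ij.val.1) (p ij.val.2)) := (Set.finite_range _).bddBelow
    have hle2 : (n:ℝ) * ((n:ℝ)-1) * (⨅ ij : {q : Fin n × Fin n // q.1 ≠ q.2},
          PsiSum ψ (p ij.val.1) (p ij.val.2))
        ≤ ∑ i, ∑ j, if i ≠ j then PsiSum ψ (p i) (p j) else 0 := by
      rw [← hconstsum]
      refine Finset.sum_le_sum fun i _ => Finset.sum_le_sum fun j _ => ?_
      by_cases hij : i ≠ j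
      · rw [if_pos hij, if_pos hij]
        exact ciInf_le hbdd ⟨(i, j), hij⟩
      · rw [if_neg hij, if_neg hij]
    refine le_trans ?_ (havgle d p hp)
    rw [le_div_iff₀ hnn1]
    linarith [hle2]
  -- construction
  obtain ⟨d₀, p₀, hp₀DP, hp₀val⟩ := construction hn ψ hsmul h11 ε hε k₀ hk₀1 hk₀2
  have hval : ∀ i j : Fin n, i ≠ j → PsiSum ψ (p₀ i) (p₀ j)
      = (ψ (Real.exp ε) 1 + ψ 1 (Real.exp ε)) / ((n:ℝ) - 1) * maxK n ε := by
    intro i j hij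
    rw [hp₀val i j hij, hGk₀]
  have hmin0 : (⨅ ij : {q : Fin n × Fin n // q.1 ≠ q.2}, PsiSum ψ (p₀ ij.val.1) (p₀ ij.val.2))
      = (ψ (Real.exp ε) 1 + ψ 1 (Real.exp ε)) / ((n:ℝ) - 1) * maxK n ε := by
    have h : (fun ij : {q : Fin n × Fin n // q.1 ≠ q.2} => PsiSum ψ (p₀ ij.val.1) (p₀ ij.val.2))
        = fun _ => (ψ (Real.exp ε) 1 + ψ 1 (Real.exp ε)) / ((n:ℝ) - 1) * maxK n ε :=
      funext fun ij => hval ij.val.1 ij.val.2 ij.prop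
    rw [h]
    exact ciInf_const
  have havg0 : (∑ i, ∑ j, if i ≠ j then PsiSum ψ (p₀ i) (p₀ j) else 0) / ((n:ℝ) * ((n:ℝ) - 1))
      = (ψ (Real.exp ε) 1 + ψ 1 (Real.exp ε)) / ((n:ℝ) - 1) * maxK n ε := by
    have h : (∑ i, ∑ j, if i ≠ j then PsiSum ψ (p₀ i) (p₀ j) else 0)
        = (n:ℝ) * ((n:ℝ) - 1) *
          ((ψ (Real.exp ε) 1 + ψ 1 (Real.exp ε)) / ((n:ℝ) - 1) * maxK n ε) := by
      rw [← hconstsum]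
      refine Finset.sum_congr rfl fun i _ => Finset.sum_congr rfl fun j _ => ?_
      by_cases hij : i ≠ j
      · rw [if_pos hij, if_pos hij, hval i j hij]
      · rw [if_neg hij, if_neg hij]
    rw [h, mul_div_cancel_left₀ _ hnn1.ne']
  have hminG : IsGreatest {x : ℝ | ∃ (d : ℕ) (p : Fin n → Fin d → ℝ), IsDP ε p ∧
      x = ⨅ ij : {q : Fin n × Fin n // q.1 ≠ q.2}, PsiSum ψ (p ij.val.1) (p ij.val.2)}
      ((ψ (Real.exp ε) 1 + ψ 1 (Real.exp ε)) / ((n:ℝ) - 1) * maxK n ε) := by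
    constructor
    · exact ⟨d₀, p₀, hp₀DP, hmin0.symm⟩
    · rintro x ⟨d, p, hp, rfl⟩
      exact hminle d p hp
  have havgG : IsGreatest {x : ℝ | ∃ (d : ℕ) (p : Fin n → Fin d → ℝ), IsDP ε p ∧
      x = (∑ i, ∑ j, if i ≠ j then PsiSum ψ (p i) (p j) else 0) / ((n : ℝ) * ((n : ℝ) - 1))}
      ((ψ (Real.exp ε) 1 + ψ 1 (Real.exp ε)) / ((n:ℝ) - 1) * maxK n ε) := by
    constructor
    · exact ⟨d₀, p₀, hp₀DP, havg0.symm⟩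
    · rintro x ⟨d, p, hp, rfl⟩
      exact havgle d p hp
  exact ⟨by rw [hminG.csSup_eq, havgG.csSup_eq], hminG.csSup_eq⟩


end
end

section
/- Let n ≥ 2 be an integer, c ∈ [0,1) and ε, t > 0 real numbers, and let (u_1,…,u_n) be unit vectors in ℝ^n with ⟨u_i,u_j⟩ = c for all i ≠ j. Define density matrices ρ_i = (1/(n+t))(I_n + t|u_i⟩⟨u_i|) for i = 1,…,n. If D = (e^ε − 1)² + 4(1−c²)e^ε and 0 < t ≤ t_max := 2(e^ε − 1)/(√D + 1 − e^ε), then (ρ_1,…,ρ_n) is CQ ε-DP. -/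
open scoped BigOperators Classical ComplexOrder
open Matrix

noncomputable section

lemma bessel2 {n : ℕ} (U R y : Fin n → ℝ) (hU : ∑ k, U k * U k = 1)
    (hR : ∑ k, R k * R k = 1) (hUR : ∑ k, U k * R k = 0) :
    (∑ k, U k * y k)^2 + (∑ k, R k * y k)^2 ≤ ∑ k, y k * y k := by
  set p := ∑ k, U k * y k with hp
  set q := ∑ k, R k * y k with hq
  have h0 : 0 ≤ ∑ k, (y k - p * U k - q * R k)^2 :=
    Finset.sum_nonneg fun k _ => sq_nonneg _
  have hexp : ∑ k, (y k - p * U k - q * R k)^2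
      = ∑ k, y k * y k - p^2 - q^2 := by
    have h1 : ∀ k ∈ Finset.univ, (y k - p * U k - q * R k)^2
        = y k * y k - 2*p*(U k * y k) - 2*q*(R k * y k)
          + p^2*(U k * U k) + q^2*(R k * R k) + 2*p*q*(U k * R k) := by
      intro k _; ring
    rw [Finset.sum_congr rfl h1]
    simp only [Finset.sum_add_distrib, Finset.sum_sub_distrib, ← Finset.mul_sum,
      hU, hR, hUR, ← hp, ← hq]
    ring
  linarith [hexp ▸ h0]

lemma cs2 (a b c' d : ℝ) : (a*c' + b*d)^2 ≤ (a^2+b^2)*(c'^2+d^2) := by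
  nlinarith [sq_nonneg (a*d - b*c')]

lemma quad2 (p r q b m w : ℝ) (hp : 0 < p) (hr : 0 ≤ r) (hq : 0 ≤ q)
    (hb : 0 ≤ b) (hm : 0 ≤ m) (hw : w^2 ≤ b*m) (hdet : q^2 ≤ p*r) :
    0 ≤ p*b + r*m - 2*q*w := by
  have hX : 0 ≤ p^2*b := by positivity
  have hY : 0 ≤ q^2*m := by positivity
  have hZ : (p*q*w)^2 ≤ (p^2*b)*(q^2*m) := by nlinarith [sq_nonneg (p*q), sq_nonneg w]
  have hsum : (2*(p*q*w))^2 ≤ (p^2*b + q^2*m)^2 := by nlinarith [sq_nonneg (p^2*b - q^2*m)]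
  have h2 : 2*(p*q*w) ≤ p^2*b + q^2*m := by nlinarith
  have h3 : (p*r - q^2)*m ≥ 0 := mul_nonneg (by linarith) hm
  nlinarith

lemma core (c E g s t N b2 m2 w a2 : ℝ)
    (hc0 : 0 ≤ c) (hs : s = 1 - c^2) (hs0 : 0 < s) (hg : 0 < g) (hE : E = g + 1)
    (ht : 0 < t) (hkey : t^2 * E * s ≤ g^2 * (1+t))
    (hb : 0 ≤ b2) (hm : 0 ≤ m2) (hw : w^2 ≤ b2 * m2) (hN : b2 + m2 ≤ N)
    (ha : a2 = c^2*b2 + s*m2 + 2*c*Real.sqrt s*w) :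
    t * a2 ≤ g * N + t*E*b2 := by
  have hsq : Real.sqrt s ^ 2 = s := Real.sq_sqrt hs0.le
  have hsqnn : 0 ≤ Real.sqrt s := Real.sqrt_nonneg s
  have hs1 : s ≤ 1 := by nlinarith [sq_nonneg c]
  have hr : 0 ≤ g - t*s := by
    by_contra h
    push_neg at h
    have hd : 0 < t*s - g := by linarith
    have h1 : 0 < t*g*(t*s - g) := mul_pos (mul_pos ht hg) hd
    have h2 : 0 < (t*s - g)*(t*s + g) := mul_pos hd (by nlinarith [mul_pos ht hs0])
    have h3 : t^2*s*s ≤ t^2*s*1 := by nlinarith [mul_pos (mul_pos ht ht) hs0]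
    nlinarith
  have hp : 0 < g + t*E - t*c^2 := by nlinarith
  have hq2 : (t*c*Real.sqrt s)^2 = t^2*c^2*s := by rw [mul_pow, mul_pow, hsq]
  have hdet : (t*c*Real.sqrt s)^2 ≤ (g + t*E - t*c^2) * (g - t*s) := by
    rw [hq2]; subst hE hs; nlinarith [hkey]
  have h := quad2 (g + t*E - t*c^2) (g - t*s) (t*c*Real.sqrt s) b2 m2 w hp hr
    (by positivity) hb hm hw hdet
  nlinarith [mul_nonneg hg.le (sub_nonneg.2 hN)]

lemma key_ineq_s10 (c ε t D : ℝ) (hc1 : c < 1) (hc0 : 0 ≤ c) (hε : 0 < ε) (ht : 0 < t)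
    (hD : D = (Real.exp ε - 1)^2 + 4*(1 - c^2)*Real.exp ε)
    (htmax : t ≤ 2*(Real.exp ε - 1)/(Real.sqrt D + 1 - Real.exp ε)) :
    t^2 * Real.exp ε * (1 - c^2) ≤ (Real.exp ε - 1)^2 * (1+t) := by
  set E := Real.exp ε with hE
  have hE1 : 1 < E := by
    have : Real.exp 0 < Real.exp ε := Real.exp_lt_exp.2 hε
    rw [hE]; simpa using this
  have hg : 0 < E - 1 := by linarith
  have hs0 : 0 < 1 - c^2 := by nlinarith
  have hDpos : (E-1)^2 < D := by rw [hD]; nlinarith [mul_pos hs0 (by linarith : (0:ℝ) < E)]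
  have hroot : E - 1 < Real.sqrt D := by
    rw [show E - 1 = Real.sqrt ((E-1)^2) from (Real.sqrt_sq hg.le).symm]
    exact Real.sqrt_lt_sqrt (sq_nonneg _) hDpos
  have hden : 0 < Real.sqrt D + 1 - E := by linarith
  have h1 : t * (Real.sqrt D + 1 - E) ≤ 2*(E-1) := by
    rw [le_div_iff₀ hden] at htmax; linarith
  have h2 : t * Real.sqrt D ≤ (E-1)*(2+t) := by nlinarith
  have h3 : (t * Real.sqrt D)^2 ≤ ((E-1)*(2+t))^2 := by
    have hl : 0 ≤ t * Real.sqrt D := mul_nonneg ht.le (Real.sqrt_nonneg D)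
    nlinarith
  have h4 : Real.sqrt D ^ 2 = D := Real.sq_sqrt (by nlinarith [sq_nonneg (E-1)])
  have h5 : t^2 * D ≤ (E-1)^2*(2+t)^2 := by nlinarith [h3, h4]
  rw [hD] at h5
  nlinarith

lemma quad_one {n : ℕ} (x : Fin n → ℂ) :
    star x ⬝ᵥ ((1 : Matrix (Fin n) (Fin n) ℂ) *ᵥ x)
      = ((∑ k, Complex.normSq (x k) : ℝ) : ℂ) := by
  push_cast
  simp only [Matrix.one_mulVec, dotProduct, Pi.star_apply, RCLike.star_def]
  refine Finset.sum_congr rfl fun k _ => ?_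
  rw [← Complex.normSq_eq_conj_mul_self]

lemma quad_P {n : ℕ} (v : Fin n → ℝ) (x : Fin n → ℂ) :
    star x ⬝ᵥ ((Matrix.of fun a b => ((v a * v b : ℝ) : ℂ)) *ᵥ x)
      = ((Complex.normSq (∑ k, (v k : ℂ) * x k) : ℝ) : ℂ) := by
  have : star x ⬝ᵥ ((Matrix.of fun a b => ((v a * v b : ℝ) : ℂ)) *ᵥ x)
      = (starRingEnd ℂ (∑ k, (v k : ℂ) * x k)) * (∑ k, (v k : ℂ) * x k) := by
    simp only [dotProduct, Matrix.mulVec, Matrix.of_apply, Pi.star_apply, map_sum,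
      RCLike.star_def, _root_.map_mul, Complex.conj_ofReal, Finset.sum_mul, Finset.mul_sum]
    rw [Finset.sum_comm]
    refine Finset.sum_congr rfl fun a _ => Finset.sum_congr rfl fun b _ => ?_
    push_cast
    ring
  rw [this, ← Complex.normSq_eq_conj_mul_self]

lemma herm_P {n : ℕ} (v : Fin n → ℝ) :
    (Matrix.of fun a b => ((v a * v b : ℝ) : ℂ)).IsHermitian := by
  ext a b
  simp [Matrix.conjTranspose_apply, Complex.conj_ofReal, mul_comm]

lemma herm_rsmul {n : ℕ} (r : ℝ) {M : Matrix (Fin n) (Fin n) ℂ} (h : M.IsHermitian) :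
    (r • M).IsHermitian := by
  unfold Matrix.IsHermitian at *
  rw [Matrix.conjTranspose_smul, star_trivial, h]


lemma normSq_sum_mul {n : ℕ} (v : Fin n → ℝ) (x : Fin n → ℂ) :
    Complex.normSq (∑ k, (v k:ℂ) * x k)
      = (∑ k, v k * (x k).re)^2 + (∑ k, v k * (x k).im)^2 := by
  rw [Complex.normSq_apply]
  have hre : (∑ k, (v k:ℂ) * x k).re = ∑ k, v k * (x k).re := by
    rw [Complex.re_sum]
    exact Finset.sum_congr rfl fun k _ => by simp [Complex.mul_re]
  have him : (∑ k, (v k:ℂ) * x k).im = ∑ k, v k * (x k).im := by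
    rw [Complex.im_sum]
    exact Finset.sum_congr rfl fun k _ => by simp [Complex.mul_im]
  rw [hre, him]; ring

lemma normSq_split {n : ℕ} (x : Fin n → ℂ) :
    (∑ k, Complex.normSq (x k))
      = (∑ k, (x k).re * (x k).re) + (∑ k, (x k).im * (x k).im) := by
  rw [← Finset.sum_add_distrib]
  exact Finset.sum_congr rfl fun k _ => by rw [Complex.normSq_apply]

lemma main_pair {n : ℕ} (c E t : ℝ) (hc0 : 0 ≤ c) (hc1 : c < 1) (hE1 : 1 < E) (ht : 0 < t)
    (hkey : t^2 * E * (1 - c^2) ≤ (E-1)^2*(1+t))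
    (ui uj : Fin n → ℝ) (hui : ∑ k, ui k * ui k = 1) (huj : ∑ k, uj k * uj k = 1)
    (hij : ∑ k, ui k * uj k = c) (hji : ∑ k, uj k * ui k = c)
    (x : Fin n → ℂ) :
    t * Complex.normSq (∑ k, (ui k:ℂ) * x k)
      ≤ (E-1) * (∑ k, Complex.normSq (x k))
        + t * E * Complex.normSq (∑ k, (uj k:ℂ) * x k) := by
  have hs0 : (0:ℝ) < 1 - c^2 := by nlinarith
  set s : ℝ := 1 - c^2 with hsdef
  set sq := Real.sqrt s with hsqdef
  have hsq2 : sq^2 = s := Real.sq_sqrt hs0.le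
  have hsqpos : 0 < sq := Real.sqrt_pos.2 hs0
  set R : Fin n → ℝ := fun k => (ui k - c * uj k) * sq⁻¹ with hRdef
  have hinv2 : sq⁻¹ * sq⁻¹ = s⁻¹ := by
    rw [← mul_inv]; congr 1; nlinarith
  have hRR : ∑ k, R k * R k = 1 := by
    have hpt : ∀ k ∈ Finset.univ, R k * R k
        = (ui k * ui k - (2*c)*(ui k * uj k) + c^2*(uj k * uj k)) * (sq⁻¹*sq⁻¹) := by
      intro k _; rw [hRdef]; ring
    rw [Finset.sum_congr rfl hpt, ← Finset.sum_mul]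
    rw [Finset.sum_add_distrib, Finset.sum_sub_distrib, ← Finset.mul_sum, ← Finset.mul_sum,
      hui, hij, huj, hinv2]
    field_simp
    ring
  have hUR : ∑ k, uj k * R k = 0 := by
    have hpt : ∀ k ∈ Finset.univ, uj k * R k
        = (uj k * ui k - c*(uj k * uj k)) * sq⁻¹ := by
      intro k _; rw [hRdef]; ring
    rw [Finset.sum_congr rfl hpt, ← Finset.sum_mul, Finset.sum_sub_distrib,
      ← Finset.mul_sum, hji, huj]
    ring
  have hki : ∀ k, ui k = c * uj k + sq * R k := by
    intro k
    rw [hRdef]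
    field_simp
    ring
  have huA : ∀ y : Fin n → ℝ, ∑ k, ui k * y k
      = c * (∑ k, uj k * y k) + sq * (∑ k, R k * y k) := by
    intro y
    have hpt : ∀ k ∈ Finset.univ, ui k * y k
        = c * (uj k * y k) + sq * (R k * y k) := by
      intro k _; rw [hki k]; ring
    rw [Finset.sum_congr rfl hpt, Finset.sum_add_distrib, ← Finset.mul_sum, ← Finset.mul_sum]
  set yr : Fin n → ℝ := fun k => (x k).re with hyr
  set yi : Fin n → ℝ := fun k => (x k).im with hyi
  set Br := ∑ k, uj k * yr k with hBr
  set Bi := ∑ k, uj k * yi k with hBi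
  set Cr := ∑ k, R k * yr k with hCr
  set Ci := ∑ k, R k * yi k with hCi
  set N := ∑ k, Complex.normSq (x k) with hNdef
  have hnAval : Complex.normSq (∑ k, (ui k:ℂ) * x k) = (c*Br + sq*Cr)^2 + (c*Bi + sq*Ci)^2 := by
    rw [normSq_sum_mul, huA yr, huA yi]
  have hnBval : Complex.normSq (∑ k, (uj k:ℂ) * x k) = Br^2 + Bi^2 := by
    rw [normSq_sum_mul]
  have hbes1 : Br^2 + Cr^2 ≤ ∑ k, yr k * yr k := bessel2 uj R yr huj hRR hUR
  have hbes2 : Bi^2 + Ci^2 ≤ ∑ k, yi k * yi k := bessel2 uj R yi huj hRR hUR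
  have hNval : (Br^2 + Bi^2) + (Cr^2 + Ci^2) ≤ N := by
    rw [hNdef, normSq_split]; exact by linarith
  have hw : (Br*Cr + Bi*Ci)^2 ≤ (Br^2 + Bi^2) * (Cr^2 + Ci^2) := cs2 Br Bi Cr Ci
  have ha : (c*Br + sq*Cr)^2 + (c*Bi + sq*Ci)^2
      = c^2*(Br^2+Bi^2) + s*(Cr^2+Ci^2) + 2*c*Real.sqrt s*(Br*Cr + Bi*Ci) := by
    rw [← hsqdef]
    linear_combination (Cr^2 + Ci^2) * hsq2
  have hcore := core c E (E-1) s t N (Br^2+Bi^2) (Cr^2+Ci^2) (Br*Cr+Bi*Ci)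
    ((c*Br + sq*Cr)^2 + (c*Bi + sq*Ci)^2)
    hc0 hsdef hs0 (by linarith) (by ring) ht (by rw [hsdef]; exact hkey)
    (by positivity) (by positivity) hw hNval ha
  rw [hnAval, hnBval]
  linarith

/-- with unit vectors `u_i ∈ ℝ^n` of pairwise inner product `c ∈ [0,1)`, the
tuple `ρ_i = (1/(n+t))(I_n + t|u_i⟩⟨u_i|)` is CQ `ε`-DP whenever
`0 < t ≤ 2(e^ε−1)/(√D+1−e^ε)`, where `D = (e^ε−1)² + 4(1−c²)e^ε`. -/
theorem statement10 (n : ℕ) (hn : 2 ≤ n) (c ε t : ℝ)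
    (hc0 : 0 ≤ c) (hc1 : c < 1) (hε : 0 < ε) (ht : 0 < t)
    (u : Fin n → Fin n → ℝ) (hu : ∀ i, ∑ k, u i k ^ 2 = 1)
    (huv : ∀ i j, i ≠ j → ∑ k, u i k * u j k = c)
    (D : ℝ) (hD : D = (Real.exp ε - 1) ^ 2 + 4 * (1 - c ^ 2) * Real.exp ε)
    (htmax : t ≤ 2 * (Real.exp ε - 1) / (Real.sqrt D + 1 - Real.exp ε)) :
    IsCQDP ε (fun i => ((n : ℝ) + t)⁻¹ •
      ((1 : Matrix (Fin n) (Fin n) ℂ) +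
        t • Matrix.of fun a b => ((u i a * u i b : ℝ) : ℂ))) := by
  have hE1 : 1 < Real.exp ε := by
    have : Real.exp 0 < Real.exp ε := Real.exp_lt_exp.2 hε
    simpa using this
  have hnt : (0:ℝ) < (n:ℝ) + t := by
    have : (0:ℝ) ≤ (n:ℝ) := Nat.cast_nonneg n
    linarith
  have hinv : (0:ℝ) ≤ ((n:ℝ) + t)⁻¹ := inv_nonneg.2 hnt.le
  have hs0 : (0:ℝ) < 1 - c^2 := by nlinarith
  have hkey : t^2 * Real.exp ε * (1 - c^2) ≤ (Real.exp ε - 1)^2 * (1+t) :=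
    key_ineq_s10 c ε t D hc1 hc0 hε ht hD htmax
  have hquad : ∀ (v : Fin n → ℝ) (x : Fin n → ℂ),
      star x ⬝ᵥ ((((n : ℝ) + t)⁻¹ •
        ((1 : Matrix (Fin n) (Fin n) ℂ) + t • Matrix.of fun a b => ((v a * v b : ℝ) : ℂ))) *ᵥ x)
      = ((((n:ℝ)+t)⁻¹ * ((∑ k, Complex.normSq (x k))
          + t * Complex.normSq (∑ k, (v k:ℂ) * x k)) : ℝ) : ℂ) := by
    intro v x
    rw [Matrix.smul_mulVec, Matrix.add_mulVec, Matrix.smul_mulVec,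
      dotProduct_smul, dotProduct_add, dotProduct_smul, quad_one, quad_P]
    simp only [Complex.real_smul]
    push_cast
    ring
  have hermrho : ∀ (v : Fin n → ℝ),
      ((((n : ℝ) + t)⁻¹ •
        ((1 : Matrix (Fin n) (Fin n) ℂ)
          + t • Matrix.of fun a b => ((v a * v b : ℝ) : ℂ)))).IsHermitian :=
    fun v => herm_rsmul _ (Matrix.isHermitian_one.add (herm_rsmul _ (herm_P v)))
  have hnorm : ∀ (v : Fin n → ℝ) (x : Fin n → ℂ),
      Complex.normSq (∑ k, (v k:ℂ) * x k)
        = (∑ k, v k * (x k).re)^2 + (∑ k, v k * (x k).im)^2 := by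
    intro v x
    rw [Complex.normSq_apply]
    have hre : (∑ k, (v k:ℂ) * x k).re = ∑ k, v k * (x k).re := by
      rw [Complex.re_sum]
      exact Finset.sum_congr rfl fun k _ => by simp [Complex.mul_re]
    have him : (∑ k, (v k:ℂ) * x k).im = ∑ k, v k * (x k).im := by
      rw [Complex.im_sum]
      exact Finset.sum_congr rfl fun k _ => by simp [Complex.mul_im]
    rw [hre, him]; ring
  have hNsplit : ∀ x : Fin n → ℂ, (∑ k, Complex.normSq (x k))
      = (∑ k, (x k).re * (x k).re) + (∑ k, (x k).im * (x k).im) := by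
    intro x
    rw [← Finset.sum_add_distrib]
    exact Finset.sum_congr rfl fun k _ => by rw [Complex.normSq_apply]
  constructor
  · -- density matrices
    intro i
    constructor
    · refine Matrix.PosSemidef.of_dotProduct_mulVec_nonneg (hermrho (u i)) fun x => ?_
      rw [hquad]
      rw [Complex.zero_le_real]
      have hN : 0 ≤ ∑ k, Complex.normSq (x k) :=
        Finset.sum_nonneg fun k _ => Complex.normSq_nonneg _
      have := Complex.normSq_nonneg (∑ k, (u i k:ℂ) * x k)
      have := ht.le
      positivity
    · rw [Matrix.trace_smul, Matrix.trace_add, Matrix.trace_one, Matrix.trace_smul]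
      have htrP : (Matrix.of fun a b => ((u i a * u i b : ℝ) : ℂ)).trace = 1 := by
        rw [Matrix.trace]
        have : ∑ a, (Matrix.of fun a b => ((u i a * u i b : ℝ) : ℂ)).diag a
            = ((∑ a, u i a ^2 : ℝ) : ℂ) := by
          push_cast
          exact Finset.sum_congr rfl fun a _ => by simp [Matrix.diag, sq]
        rw [this, hu i]; norm_num
      rw [htrP]
      have hcard : ((Fintype.card (Fin n) : ℂ)) = ((n:ℝ) : ℂ) := by simp
      simp only [Complex.real_smul, mul_one, hcard]
      rw [← Complex.ofReal_add, ← Complex.ofReal_mul, inv_mul_cancel₀ hnt.ne',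
        Complex.ofReal_one]
  · -- DP condition
    intro i j
    set E := Real.exp ε with hEdef
    refine Matrix.PosSemidef.of_dotProduct_mulVec_nonneg (Matrix.IsHermitian.sub (herm_rsmul _ (hermrho (u j))) (hermrho (u i))) fun x => ?_
    rw [Matrix.sub_mulVec, dotProduct_sub, Matrix.smul_mulVec, dotProduct_smul,
      hquad, hquad]
    rw [Complex.real_smul, ← Complex.ofReal_mul, ← Complex.ofReal_sub, Complex.zero_le_real]
    set N := ∑ k, Complex.normSq (x k) with hNdef
    set nA := Complex.normSq (∑ k, (u i k:ℂ) * x k) with hnAdef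
    set nB := Complex.normSq (∑ k, (u j k:ℂ) * x k) with hnBdef
    have hN0 : 0 ≤ N := Finset.sum_nonneg fun k _ => Complex.normSq_nonneg _
    have hnA0 : 0 ≤ nA := Complex.normSq_nonneg _
    have hnB0 : 0 ≤ nB := Complex.normSq_nonneg _
    have hmain : t * nA ≤ (E - 1) * N + t * E * nB := by
      by_cases hij : i = j
      · subst hij
        have : nA = nB := by rw [hnAdef, hnBdef]
        nlinarith [mul_nonneg ht.le hnA0]
      · -- i ≠ j
        exact main_pair c E t hc0 hc1 hE1 ht hkey (u i) (u j)
          (by rw [← hu i]; exact Finset.sum_congr rfl fun k _ => (pow_two (u i k)).symm)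
          (by rw [← hu j]; exact Finset.sum_congr rfl fun k _ => (pow_two (u j k)).symm)
          (huv i j hij) (huv j i (Ne.symm hij)) x
    have hfinal : 0 ≤ E * (((n:ℝ)+t)⁻¹ * (N + t*nB)) - ((n:ℝ)+t)⁻¹ * (N + t*nA) := by
      have heq : E * (((n:ℝ)+t)⁻¹ * (N + t*nB)) - ((n:ℝ)+t)⁻¹ * (N + t*nA)
          = ((n:ℝ)+t)⁻¹ * ((E-1)*N + t*E*nB - t*nA) := by ring
      rw [heq]
      exact mul_nonneg hinv (by linarith)
    exact hfinal

end
end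

section
/- Let u, v be unit vectors in ℂ^n with |⟨u,v⟩| = c for some c ∈ [0,1), let ε > 0, and set D = (e^ε − 1)² + 4(1−c²)e^ε. Then |u⟩⟨u| − e^ε |v⟩⟨v| ≤ ((1 − e^ε + √D)/2)·I_n in the positive semidefinite (Loewner) order; that is, ((1 − e^ε + √D)/2)·I_n − |u⟩⟨u| + e^ε |v⟩⟨v| is positive semidefinite. -/
open scoped BigOperators Classical ComplexOrder
open Matrix

noncomputable section

set_option maxHeartbeats 1000000

lemma core_ineq (c E m t s α β : ℝ) (hc0 : 0 ≤ c) (hc1 : c < 1) (hm : m = 1 - c^2)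
    (hE : 1 < E) (ht : t = (1 - E + Real.sqrt ((E-1)^2 + 4*m*E))/2)
    (hα : 0 ≤ α) (hβ : 0 ≤ β) (hcon : α^2 + β^2 - 2*c*α*β ≤ m*s) :
    α^2 - E*β^2 ≤ t*s := by
  have hm0 : 0 < m := by nlinarith
  have hE0 : 0 < E := by linarith
  have hD0 : (0:ℝ) ≤ (E-1)^2 + 4*m*E := by positivity
  have hs : Real.sqrt ((E-1)^2 + 4*m*E) = 2*t + E - 1 := by rw [ht]; ring
  have hsq := Real.sq_sqrt hD0
  rw [hs] at hsq
  have key : t^2 + t*(E-1) = m*E := by nlinarith [hsq]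
  have ht0 : 0 < t := by
    have h1 : (E-1)^2 < (E-1)^2 + 4*m*E := by nlinarith
    have h2 : E - 1 < Real.sqrt ((E-1)^2 + 4*m*E) := by
      calc E - 1 = Real.sqrt ((E-1)^2) := by rw [Real.sqrt_sq (by linarith)]
      _ < _ := Real.sqrt_lt_sqrt (by positivity) h1
    rw [ht]; linarith
  have htm : m ≤ t := by nlinarith [key]
  have hAB : (t - m) * (t + E*m) = c^2 * t^2 := by nlinarith [key]
  have hX : 0 ≤ (t-m)*α^2 + (t+E*m)*β^2 := by
    nlinarith [mul_nonneg (sub_nonneg.mpr htm) (sq_nonneg α),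
      mul_nonneg (by nlinarith : (0:ℝ) ≤ t + E*m) (sq_nonneg β)]
  have hY : 0 ≤ 2*c*t*α*β := by positivity
  have hXY : ((t-m)*α^2 + (t+E*m)*β^2)^2 ≥ (2*c*t*α*β)^2 := by
    have hid : ((t-m)*α^2 + (t+E*m)*β^2)^2 - (2*c*t*α*β)^2
        = ((t-m)*α^2 - (t+E*m)*β^2)^2 := by linear_combination (4*α^2*β^2) * hAB
    linarith [sq_nonneg ((t-m)*α^2 - (t+E*m)*β^2), hid]
  have hmain : (t-m)*α^2 + (t+E*m)*β^2 ≥ 2*c*t*α*β := by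
    by_contra h
    push_neg at h
    have := pow_lt_pow_left₀ h hX two_ne_zero
    linarith [hXY, this]
  have h1 : t*(α^2+β^2-2*c*α*β) ≤ t*(m*s) := mul_le_mul_of_nonneg_left hcon ht0.le
  have h2 : m*(α^2 - E*β^2) ≤ m*(t*s) := by nlinarith [h1, hmain]
  exact le_of_mul_le_mul_left h2 hm0

/-- for unit vectors `u,v ∈ ℂ^n` with `|⟨u,v⟩| = c ∈ [0,1)` and `ε > 0`,
`|u⟩⟨u| − e^ε|v⟩⟨v| ≤ ((1−e^ε+√D)/2)·I_n` where `D = (e^ε−1)² + 4(1−c²)e^ε`. -/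
theorem statement11 (n : ℕ) (u v : Fin n → ℂ)
    (hu : ∑ k, ‖u k‖ ^ 2 = 1) (hv : ∑ k, ‖v k‖ ^ 2 = 1)
    (c : ℝ) (hc0 : 0 ≤ c) (hc1 : c < 1)
    (huv : ‖∑ k, starRingEnd ℂ (u k) * v k‖ = c)
    (ε : ℝ) (hε : 0 < ε)
    (D : ℝ) (hD : D = (Real.exp ε - 1) ^ 2 + 4 * (1 - c ^ 2) * Real.exp ε) :
    (((1 - Real.exp ε + Real.sqrt D) / 2) • (1 : Matrix (Fin n) (Fin n) ℂ)
      - Matrix.of (fun a b => u a * starRingEnd ℂ (u b))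
      + Real.exp ε • Matrix.of (fun a b => v a * starRingEnd ℂ (v b))).PosSemidef := by
  set E : ℝ := Real.exp ε with hEdef
  set t : ℝ := (1 - E + Real.sqrt D) / 2 with htdef
  have hE1 : 1 < E := Real.one_lt_exp_iff.mpr hε
  refine Matrix.PosSemidef.of_dotProduct_mulVec_nonneg ?_ ?_
  · -- Hermitian
    show _ = _
    ext i j
    simp only [conjTranspose_apply, Matrix.add_apply, Matrix.sub_apply, Matrix.smul_apply,
      Matrix.one_apply, Matrix.of_apply, star_sub, star_add, star_smul]
    simp only [star_trivial, star_mul', RingHomCompTriple.comp_apply, RingHom.id_apply,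
      Complex.star_def, Complex.conj_conj, star_one, star_zero, apply_ite (starRingEnd ℂ),
      RingHom.map_one, map_zero]
    by_cases h : i = j
    · simp [h, mul_comm]
    · simp [h, Ne.symm h, mul_comm]
  · intro x
    set a : ℂ := ∑ k, starRingEnd ℂ (u k) * x k with hadef
    set b : ℂ := ∑ k, starRingEnd ℂ (v k) * x k with hbdef
    set g : ℂ := ∑ k, starRingEnd ℂ (u k) * v k with hgdef
    set s : ℝ := ∑ k, Complex.normSq (x k) with hsdef
    -- basic sum identities
    have hS : (∑ k, starRingEnd ℂ (x k) * x k) = ((s : ℝ) : ℂ) := by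
      rw [hsdef, Complex.ofReal_sum]
      exact Finset.sum_congr rfl fun k _ => (Complex.normSq_eq_conj_mul_self).symm
    have hUnit : ∀ (w : Fin n → ℂ), (∑ k, ‖w k‖ ^ 2 = 1) →
        (∑ k, starRingEnd ℂ (w k) * w k) = 1 := by
      intro w hw
      have h1 : (∑ k, starRingEnd ℂ (w k) * w k) = ((∑ k, ‖w k‖ ^ 2 : ℝ) : ℂ) := by
        rw [Complex.ofReal_sum]
        exact Finset.sum_congr rfl fun k _ => by
          rw [Complex.sq_norm, Complex.normSq_eq_conj_mul_self]
      rw [h1, hw, Complex.ofReal_one]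
    have hU := hUnit u hu
    have hV := hUnit v hv
    -- quadratic form of a rank-one projector
    have key2 : ∀ (w : Fin n → ℂ),
        star x ⬝ᵥ (Matrix.of (fun i j => w i * starRingEnd ℂ (w j)) *ᵥ x)
        = starRingEnd ℂ (∑ k, starRingEnd ℂ (w k) * x k) * (∑ k, starRingEnd ℂ (w k) * x k) := by
      intro w
      have hA : starRingEnd ℂ (∑ k, starRingEnd ℂ (w k) * x k)
          = ∑ k, starRingEnd ℂ (x k) * w k := by
        rw [map_sum]
        exact Finset.sum_congr rfl fun k _ => by
          rw [_root_.map_mul, Complex.conj_conj]; ring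
      calc star x ⬝ᵥ (Matrix.of (fun i j => w i * starRingEnd ℂ (w j)) *ᵥ x)
          = ∑ i, starRingEnd ℂ (x i) * (w i * ∑ j, starRingEnd ℂ (w j) * x j) := by
            simp only [dotProduct, mulVec, Matrix.of_apply, Pi.star_apply, Complex.star_def]
            exact Finset.sum_congr rfl fun i _ => by
              simp only [Finset.mul_sum]
              exact Finset.sum_congr rfl fun j _ => by ring
        _ = (∑ i, starRingEnd ℂ (x i) * w i) * ∑ j, starRingEnd ℂ (w j) * x j := by
            rw [Finset.sum_mul]
            exact Finset.sum_congr rfl fun i _ => by ring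
        _ = _ := by rw [← hA]
    -- quadratic form of the full matrix
    have hform : star x ⬝ᵥ (t • (1 : Matrix (Fin n) (Fin n) ℂ)
          - Matrix.of (fun i j => u i * starRingEnd ℂ (u j))
          + E • Matrix.of (fun i j => v i * starRingEnd ℂ (v j))) *ᵥ x
        = ((t * s - Complex.normSq a + E * Complex.normSq b : ℝ) : ℂ) := by
      rw [Matrix.add_mulVec, Matrix.sub_mulVec, Matrix.smul_mulVec,
        Matrix.smul_mulVec, Matrix.one_mulVec, dotProduct_add, dotProduct_sub,
        dotProduct_smul, dotProduct_smul, key2 u, key2 v, ← hadef, ← hbdef]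
      rw [show star x ⬝ᵥ x = ((s : ℝ) : ℂ) from by
        simpa only [dotProduct, Pi.star_apply, Complex.star_def] using hS]
      rw [← Complex.normSq_eq_conj_mul_self, ← Complex.normSq_eq_conj_mul_self]
      push_cast
      try simp only [Complex.real_smul]
      try push_cast
      try ring
    rw [hform]
    rw [Complex.zero_le_real]
    -- the Gram/Cauchy-Schwarz constraint
    set m : ℝ := 1 - c^2 with hmdef
    have hm0 : 0 < m := by nlinarith
    set P : ℂ := a - g * b with hPdef
    set Q : ℂ := b - starRingEnd ℂ g * a with hQdef
    have hgc : starRingEnd ℂ g * g = 1 - ((m : ℝ) : ℂ) := by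
      rw [← Complex.normSq_eq_conj_mul_self, ← Complex.sq_norm, hgdef, huv, hmdef]
      push_cast; ring
    have hy0 : (0:ℂ) ≤ ∑ k, starRingEnd ℂ
        ((m:ℂ) * x k - P * u k - Q * v k) * ((m:ℂ) * x k - P * u k - Q * v k) :=
      Finset.sum_nonneg fun k _ => by
        rw [← Complex.normSq_eq_conj_mul_self]
        exact Complex.zero_le_real.mpr (Complex.normSq_nonneg _)
    have hca : (∑ k, u k * starRingEnd ℂ (x k)) = starRingEnd ℂ a := by
      rw [hadef, map_sum]
      exact Finset.sum_congr rfl fun k _ => by rw [_root_.map_mul, Complex.conj_conj]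
    have hcb : (∑ k, v k * starRingEnd ℂ (x k)) = starRingEnd ℂ b := by
      rw [hbdef, map_sum]
      exact Finset.sum_congr rfl fun k _ => by rw [_root_.map_mul, Complex.conj_conj]
    have hcg : (∑ k, u k * starRingEnd ℂ (v k)) = starRingEnd ℂ g := by
      rw [hgdef, map_sum]
      exact Finset.sum_congr rfl fun k _ => by rw [_root_.map_mul, Complex.conj_conj]
    have hexp : (∑ k, starRingEnd ℂ
          ((m:ℂ) * x k - P * u k - Q * v k) * ((m:ℂ) * x k - P * u k - Q * v k))
        = ((m:ℝ):ℂ)^2 * ((s:ℝ):ℂ)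
          - (m:ℂ)*P*(starRingEnd ℂ a) - (m:ℂ)*Q*(starRingEnd ℂ b)
          - (m:ℂ)*(starRingEnd ℂ P)*a - (m:ℂ)*(starRingEnd ℂ Q)*b
          + (starRingEnd ℂ P)*P*1 + (starRingEnd ℂ P)*Q*g
          + (starRingEnd ℂ Q)*P*(starRingEnd ℂ g) + (starRingEnd ℂ Q)*Q*1 := by
      have e1 : ∀ k, starRingEnd ℂ ((m:ℂ) * x k - P * u k - Q * v k)
            * ((m:ℂ) * x k - P * u k - Q * v k)
          = ((m:ℝ):ℂ)^2 * (starRingEnd ℂ (x k) * x k)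
            - (m:ℂ)*P*(u k * starRingEnd ℂ (x k)) - (m:ℂ)*Q*(v k * starRingEnd ℂ (x k))
            - (m:ℂ)*(starRingEnd ℂ P)*(starRingEnd ℂ (u k) * x k)
            - (m:ℂ)*(starRingEnd ℂ Q)*(starRingEnd ℂ (v k) * x k)
            + (starRingEnd ℂ P)*P*(starRingEnd ℂ (u k) * u k)
            + (starRingEnd ℂ P)*Q*(starRingEnd ℂ (u k) * v k)
            + (starRingEnd ℂ Q)*P*(u k * starRingEnd ℂ (v k))
            + (starRingEnd ℂ Q)*Q*(starRingEnd ℂ (v k) * v k) := by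
        intro k
        simp only [map_sub, _root_.map_mul, Complex.conj_ofReal]
        ring
      rw [Finset.sum_congr rfl fun k _ => e1 k]
      simp only [Finset.sum_sub_distrib, Finset.sum_add_distrib, ← Finset.mul_sum]
      rw [hS, hca, hcb, hcg, hU, hV, ← hadef, ← hbdef, ← hgdef]
    have hcollapse : (∑ k, starRingEnd ℂ
          ((m:ℂ) * x k - P * u k - Q * v k) * ((m:ℂ) * x k - P * u k - Q * v k))
        = (m:ℂ) * ((m:ℂ)*((s:ℝ):ℂ) - starRingEnd ℂ a * a - starRingEnd ℂ b * b
            + g * starRingEnd ℂ a * b + starRingEnd ℂ g * a * starRingEnd ℂ b) := by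
      rw [hexp, hPdef, hQdef]
      simp only [map_sub, _root_.map_mul, Complex.conj_conj]
      linear_combination (g * starRingEnd ℂ a * b + starRingEnd ℂ g * a * starRingEnd ℂ b
        - starRingEnd ℂ a * a - starRingEnd ℂ b * b) * hgc
    rw [hcollapse] at hy0
    -- turn into a real inequality
    have hreal : (m:ℂ)*((s:ℝ):ℂ) - starRingEnd ℂ a * a - starRingEnd ℂ b * b
          + g * starRingEnd ℂ a * b + starRingEnd ℂ g * a * starRingEnd ℂ b
        = ((m * s - Complex.normSq a - Complex.normSq b
            + 2 * (g * starRingEnd ℂ a * b).re : ℝ) : ℂ) := by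
      have hz : starRingEnd ℂ g * a * starRingEnd ℂ b
          = starRingEnd ℂ (g * starRingEnd ℂ a * b) := by
        simp only [_root_.map_mul, Complex.conj_conj]
        try ring
      have hac := Complex.add_conj (g * starRingEnd ℂ a * b)
      push_cast at hac
      rw [hz, ← Complex.normSq_eq_conj_mul_self, ← Complex.normSq_eq_conj_mul_self]
      push_cast
      linear_combination hac
    rw [hreal, ← Complex.ofReal_mul, Complex.zero_le_real] at hy0
    have hgram : ‖a‖ ^ 2 + ‖b‖ ^ 2
        - 2 * c * ‖a‖ * ‖b‖ ≤ m * s := by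
      have hre : (g * starRingEnd ℂ a * b).re ≤ c * ‖a‖ * ‖b‖ := by
        calc (g * starRingEnd ℂ a * b).re ≤ ‖g * starRingEnd ℂ a * b‖ :=
              Complex.re_le_norm _
        _ = c * ‖a‖ * ‖b‖ := by
              rw [norm_mul, norm_mul, Complex.norm_conj, huv]
              try ring
      have h2 := mul_nonneg hm0.le (le_of_eq rfl)
      nlinarith [hy0, hre, Complex.sq_norm a, Complex.sq_norm b, hm0]
    have hfin := core_ineq c E m t s (‖a‖) (‖b‖) hc0 hc1 hmdef hE1
      (by rw [htdef, hD, hmdef]) (norm_nonneg a) (norm_nonneg b) hgram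
    nlinarith [hfin, Complex.sq_norm a, Complex.sq_norm b]


end
end

section
/- Let d ≥ 2 be an integer, c ∈ [0,1) and t > 0 real numbers, θ ∈ [0,1], and let u, v be unit vectors in ℂ^d with |⟨u,v⟩| = c. Define the density matrices ρ = (1/(d+t))(I_d + t|u⟩⟨u|) and σ = (1/(d+t))(I_d + t|v⟩⟨v|). Then the RLD Fisher information satisfies J_θ(ρ,σ) = (t²/(d+t)) · (1−c²) · (2+t)/(1 + t + t²θ(1−θ)(1−c²)). -/
open scoped BigOperators Classical ComplexOrder
open Matrix

noncomputable section

/-- for unit vectors `u,v ∈ ℂ^d` with `|⟨u,v⟩| = c`, the density matrices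
`ρ = (1/(d+t))(I_d + t|u⟩⟨u|)` and `σ = (1/(d+t))(I_d + t|v⟩⟨v|)` satisfy
`J_θ(ρ,σ) = (t²/(d+t))·(1−c²)·(2+t)/(1+t+t²θ(1−θ)(1−c²))`. -/
theorem statement12 (d : ℕ) (hd : 2 ≤ d) (c t θ : ℝ)
    (hc0 : 0 ≤ c) (hc1 : c < 1) (ht : 0 < t) (hθ : θ ∈ Set.Icc (0 : ℝ) 1)
    (u v : Fin d → ℂ)
    (hu : ∑ k, ‖u k‖ ^ 2 = 1) (hv : ∑ k, ‖v k‖ ^ 2 = 1)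
    (huv : ‖∑ k, starRingEnd ℂ (u k) * v k‖ = c) :
    Jq θ
      (((d : ℝ) + t)⁻¹ • ((1 : Matrix (Fin d) (Fin d) ℂ) +
        t • Matrix.of fun a b => u a * starRingEnd ℂ (u b)))
      (((d : ℝ) + t)⁻¹ • ((1 : Matrix (Fin d) (Fin d) ℂ) +
        t • Matrix.of fun a b => v a * starRingEnd ℂ (v b)))
    = t ^ 2 / ((d : ℝ) + t) * (1 - c ^ 2) *
        ((2 + t) / (1 + t + t ^ 2 * θ * (1 - θ) * (1 - c ^ 2))) := by
  obtain ⟨hθ0, hθ1⟩ := hθ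
  set P : Matrix (Fin d) (Fin d) ℂ := Matrix.of fun a b => u a * starRingEnd ℂ (u b) with hPdef
  set Q : Matrix (Fin d) (Fin d) ℂ := Matrix.of fun a b => v a * starRingEnd ℂ (v b) with hQdef
  set s : ℂ := ∑ k, starRingEnd ℂ (u k) * v k with hsdef
  -- basic scalar facts
  have hsumu : (∑ k, starRingEnd ℂ (u k) * u k) = 1 := by
    have h1 : ∀ k, starRingEnd ℂ (u k) * u k = ((‖u k‖ ^ 2 : ℝ) : ℂ) := by
      intro k
      rw [mul_comm, Complex.mul_conj, ← Complex.sq_norm]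
    rw [Finset.sum_congr rfl fun k _ => h1 k, ← Complex.ofReal_sum, hu, Complex.ofReal_one]
  have hsumv : (∑ k, starRingEnd ℂ (v k) * v k) = 1 := by
    have h1 : ∀ k, starRingEnd ℂ (v k) * v k = ((‖v k‖ ^ 2 : ℝ) : ℂ) := by
      intro k
      rw [mul_comm, Complex.mul_conj, ← Complex.sq_norm]
    rw [Finset.sum_congr rfl fun k _ => h1 k, ← Complex.ofReal_sum, hv, Complex.ofReal_one]
  have hsc : starRingEnd ℂ s = ∑ k, starRingEnd ℂ (v k) * u k := by
    rw [hsdef, map_sum]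
    exact Finset.sum_congr rfl fun k _ => by simp [mul_comm]
  have hss : s * starRingEnd ℂ s = ((c ^ 2 : ℝ) : ℂ) := by
    rw [Complex.mul_conj, ← Complex.sq_norm, huv]
  have hss' : starRingEnd ℂ s * s = ((c ^ 2 : ℝ) : ℂ) := by rw [mul_comm]; exact hss
  -- matrix algebra facts
  set R : Matrix (Fin d) (Fin d) ℂ := Matrix.of fun a b => u a * starRingEnd ℂ (v b) with hRdef
  set R' : Matrix (Fin d) (Fin d) ℂ := Matrix.of fun a b => v a * starRingEnd ℂ (u b) with hR'def
  have hP2 : P * P = P := by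
    ext a b
    simp only [hPdef, Matrix.mul_apply, Matrix.of_apply]
    have h1 : ∀ k ∈ Finset.univ, u a * starRingEnd ℂ (u k) * (u k * starRingEnd ℂ (u b))
        = (starRingEnd ℂ (u k) * u k) * (u a * starRingEnd ℂ (u b)) := fun k _ => by ring
    rw [Finset.sum_congr rfl h1, ← Finset.sum_mul, hsumu, one_mul]
  have hQ2 : Q * Q = Q := by
    ext a b
    simp only [hQdef, Matrix.mul_apply, Matrix.of_apply]
    have h1 : ∀ k ∈ Finset.univ, v a * starRingEnd ℂ (v k) * (v k * starRingEnd ℂ (v b))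
        = (starRingEnd ℂ (v k) * v k) * (v a * starRingEnd ℂ (v b)) := fun k _ => by ring
    rw [Finset.sum_congr rfl h1, ← Finset.sum_mul, hsumv, one_mul]
  have hPQ : P * Q = s • R := by
    ext a b
    simp only [hPdef, hQdef, hRdef, Matrix.mul_apply, Matrix.of_apply, Matrix.smul_apply,
      smul_eq_mul]
    have h1 : ∀ k ∈ Finset.univ, u a * starRingEnd ℂ (u k) * (v k * starRingEnd ℂ (v b))
        = (starRingEnd ℂ (u k) * v k) * (u a * starRingEnd ℂ (v b)) := fun k _ => by ring
    rw [Finset.sum_congr rfl h1, ← Finset.sum_mul, ← hsdef]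
  have hQP : Q * P = (starRingEnd ℂ s) • R' := by
    ext a b
    simp only [hPdef, hQdef, hR'def, Matrix.mul_apply, Matrix.of_apply, Matrix.smul_apply,
      smul_eq_mul, hsc]
    have h1 : ∀ k ∈ Finset.univ, v a * starRingEnd ℂ (v k) * (u k * starRingEnd ℂ (u b))
        = (starRingEnd ℂ (v k) * u k) * (v a * starRingEnd ℂ (u b)) := fun k _ => by ring
    rw [Finset.sum_congr rfl h1, ← Finset.sum_mul]
  have hRP : R * P = (starRingEnd ℂ s) • P := by
    ext a b
    simp only [hPdef, hRdef, Matrix.mul_apply, Matrix.of_apply, Matrix.smul_apply,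
      smul_eq_mul, hsc]
    have h1 : ∀ k ∈ Finset.univ, u a * starRingEnd ℂ (v k) * (u k * starRingEnd ℂ (u b))
        = (starRingEnd ℂ (v k) * u k) * (u a * starRingEnd ℂ (u b)) := fun k _ => by ring
    rw [Finset.sum_congr rfl h1, ← Finset.sum_mul]
  have hR'Q : R' * Q = s • Q := by
    ext a b
    simp only [hQdef, hR'def, Matrix.mul_apply, Matrix.of_apply, Matrix.smul_apply,
      smul_eq_mul, hsdef]
    have h1 : ∀ k ∈ Finset.univ, v a * starRingEnd ℂ (u k) * (v k * starRingEnd ℂ (v b))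
        = (starRingEnd ℂ (u k) * v k) * (v a * starRingEnd ℂ (v b)) := fun k _ => by ring
    rw [Finset.sum_congr rfl h1, ← Finset.sum_mul]
  have hPQP : P * (Q * P) = ((c ^ 2 : ℝ) : ℂ) • P := by
    rw [← mul_assoc, hPQ, smul_mul_assoc, hRP, smul_smul, hss]
  have hQPQ : Q * (P * Q) = ((c ^ 2 : ℝ) : ℂ) • Q := by
    rw [← mul_assoc, hQP, smul_mul_assoc, hR'Q, smul_smul, hss']
  have hPPQ : P * (P * Q) = P * Q := by rw [← mul_assoc, hP2]
  have hQQP : Q * (Q * P) = Q * P := by rw [← mul_assoc, hQ2]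
  -- traces
  have hTrP : P.trace = 1 := by
    simp only [Matrix.trace, Matrix.diag, hPdef, Matrix.of_apply]
    rw [← hsumu]
    exact Finset.sum_congr rfl fun k _ => by ring
  have hTrQ : Q.trace = 1 := by
    simp only [Matrix.trace, Matrix.diag, hQdef, Matrix.of_apply]
    rw [← hsumv]
    exact Finset.sum_congr rfl fun k _ => by ring
  have hTrR : R.trace = starRingEnd ℂ s := by
    simp only [Matrix.trace, Matrix.diag, hRdef, Matrix.of_apply, hsc]
    exact Finset.sum_congr rfl fun k _ => by ring
  have hTrPQ : (P * Q).trace = ((c ^ 2 : ℝ) : ℂ) := by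
    rw [hPQ, Matrix.trace_smul, hTrR, smul_eq_mul, hss]
  have hTrQP : (Q * P).trace = ((c ^ 2 : ℝ) : ℂ) := by
    rw [Matrix.trace_mul_comm, hTrPQ]
  -- scalar setup
  set a : ℝ := t * (1 - θ) with hadef
  set b : ℝ := t * θ with hbdef
  set D : ℝ := (1 + a) * (1 + b) - a * b * c ^ 2 with hDdef
  have hc2 : c ^ 2 < 1 := by nlinarith
  have hDval : D = 1 + t + t ^ 2 * θ * (1 - θ) * (1 - c ^ 2) := by
    rw [hDdef, hadef, hbdef]; ring
  have hDpos : 0 < D := by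
    have h1c : (0:ℝ) ≤ 1 - c ^ 2 := by nlinarith
    have h2 : (0:ℝ) ≤ t ^ 2 * θ * (1 - θ) * (1 - c ^ 2) :=
      mul_nonneg (mul_nonneg (mul_nonneg (sq_nonneg t) hθ0) (by linarith)) h1c
    rw [hDval]; linarith
  have hDne : D ≠ 0 := ne_of_gt hDpos
  set x : ℝ := -a * (1 + b) / D with hxdef
  set y : ℝ := -b * (1 + a) / D with hydef
  set z : ℝ := a * b / D with hzdef
  have e1 : ((x : ℂ)) + a + a * x + a * z * ((c ^ 2 : ℝ) : ℂ) = 0 := by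
    have : x + a + a * x + a * z * c ^ 2 = 0 := by
      rw [hxdef, hzdef]; field_simp; rw [hDdef]; ring
    exact_mod_cast this
  have e2 : ((y : ℂ)) + b + b * y + b * z * ((c ^ 2 : ℝ) : ℂ) = 0 := by
    have : y + b + b * y + b * z * c ^ 2 = 0 := by
      rw [hydef, hzdef]; field_simp; rw [hDdef]; ring
    exact_mod_cast this
  have e3 : ((z : ℂ)) + a * y + a * z = 0 := by
    have : z + a * y + a * z = 0 := by
      rw [hydef, hzdef]; field_simp; ring
    exact_mod_cast this
  have e4 : ((z : ℂ)) + b * x + b * z = 0 := by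
    have : z + b * x + b * z = 0 := by
      rw [hxdef, hzdef]; field_simp; ring
    exact_mod_cast this
  set M : Matrix (Fin d) (Fin d) ℂ := 1 + (a : ℂ) • P + (b : ℂ) • Q with hMdef
  set N : Matrix (Fin d) (Fin d) ℂ :=
    1 + (x : ℂ) • P + (y : ℂ) • Q + (z : ℂ) • (P * Q) + (z : ℂ) • (Q * P) with hNdef
  have hMN : M * N = 1 := by
    have expand : M * N = 1 + (((x : ℂ)) + a + a * x + a * z * ((c ^ 2 : ℝ) : ℂ)) • P
        + (((y : ℂ)) + b + b * y + b * z * ((c ^ 2 : ℝ) : ℂ)) • Q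
        + (((z : ℂ)) + a * y + a * z) • (P * Q)
        + (((z : ℂ)) + b * x + b * z) • (Q * P) := by
      rw [hMdef, hNdef]
      simp only [add_mul, mul_add, one_mul, mul_one, smul_mul_assoc, mul_smul_comm,
        smul_smul, hP2, hQ2, hPPQ, hQQP, hPQP, hQPQ]
      module
    rw [expand, e1, e2, e3, e4]
    simp
  -- real smul to complex smul
  have hreal : ∀ (r : ℝ) (A : Matrix (Fin d) (Fin d) ℂ), r • A = (r : ℂ) • A := by
    intro r A; ext i j; simp [Complex.real_smul]
  set α : ℝ := ((d : ℝ) + t)⁻¹ with hαdef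
  have hdt : (0 : ℝ) < (d : ℝ) + t := by positivity
  have hdtne : ((d : ℝ) + t) ≠ 0 := ne_of_gt hdt
  have hαne : α ≠ 0 := by rw [hαdef]; exact inv_ne_zero hdtne
  set ρm : Matrix (Fin d) (Fin d) ℂ := ((d : ℝ) + t)⁻¹ • (1 + t • P) with hρdef
  set σm : Matrix (Fin d) (Fin d) ℂ := ((d : ℝ) + t)⁻¹ • (1 + t • Q) with hσdef
  have hρc : ρm = (α : ℂ) • (1 + (t : ℂ) • P) := by
    rw [hρdef, hreal t P, hreal]
  have hσc : σm = (α : ℂ) • (1 + (t : ℂ) • Q) := by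
    rw [hσdef, hreal t Q, hreal]
  have hdiffm : σm - ρm = ((α * t : ℝ) : ℂ) • (Q - P) := by
    rw [hρc, hσc]
    match_scalars <;> push_cast <;> ring
  have hmid : (1 - (θ : ℂ)) • ρm + (θ : ℂ) • σm = (α : ℂ) • M := by
    rw [hρc, hσc, hMdef]
    match_scalars <;> push_cast [hadef, hbdef] <;> ring
  have hinv : ((1 - (θ : ℂ)) • ρm + (θ : ℂ) • σm)⁻¹ = ((α⁻¹ : ℝ) : ℂ) • N := by
    apply Matrix.inv_eq_right_inv
    rw [hmid, smul_mul_assoc, mul_smul_comm, smul_smul, hMN]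
    have : (α : ℂ) * ((α⁻¹ : ℝ) : ℂ) = 1 := by
      rw [← Complex.ofReal_mul, mul_inv_cancel₀ hαne, Complex.ofReal_one]
    rw [this, one_smul]
  have hdiff2 : (Q - P) * (Q - P) = P + Q - P * Q - Q * P := by
    rw [sub_mul, mul_sub, mul_sub, hP2, hQ2]
    abel
  have hTfull : ((P + Q - P * Q - Q * P) * N).trace
      = (((1 - c ^ 2) * (2 + x + y + 2 * z * c ^ 2) : ℝ) : ℂ) := by
    rw [hNdef]
    simp only [add_mul, sub_mul, mul_add, mul_sub, mul_one, one_mul, smul_mul_assoc,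
      mul_smul_comm, smul_smul, mul_assoc, hP2, hQ2, hPPQ, hQQP, hPQP, hQPQ,
      Matrix.trace_add, Matrix.trace_sub, Matrix.trace_smul, hTrP, hTrQ, hTrPQ, hTrQP,
      smul_eq_mul]
    push_cast
    ring
  -- main computation
  have hJ : Jq θ ρm σm = (α * t) ^ 2 * α⁻¹ * ((1 - c ^ 2) * (2 + x + y + 2 * z * c ^ 2)) := by
    rw [Jq, hinv, hdiffm, smul_pow, pow_two (Q - P), hdiff2, smul_mul_assoc, mul_smul_comm,
      smul_smul, Matrix.trace_smul, hTfull, smul_eq_mul]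
    have : (((α * t : ℝ) : ℂ)) ^ 2 * ((α⁻¹ : ℝ) : ℂ)
          * (((1 - c ^ 2) * (2 + x + y + 2 * z * c ^ 2) : ℝ) : ℂ)
        = (((α * t) ^ 2 * α⁻¹ * ((1 - c ^ 2) * (2 + x + y + 2 * z * c ^ 2)) : ℝ) : ℂ) := by
      push_cast; ring
    rw [this, Complex.ofReal_re]
  rw [hJ, hxdef, hydef, hzdef, hαdef, ← hDval]
  field_simp [hDne, hdtne]
  rw [hDdef, hadef, hbdef]
  ring

end
end

section
/- For every real θ ∈ [0,1] and every real ε > 0, setting s = e^ε − 1, the supremum M_2^C(ε;J_θ) of J_θ(p,q) over ε-DP pairs (p,q) of probability vectors with positive entries equals s²/(((1−θ)s + 1)(θs + 1)). -/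
open scoped BigOperators Classical ComplexOrder
open Matrix

noncomputable section

lemma key_ineq_s13 (θ E p q : ℝ) (hθ0 : 0 ≤ θ) (hθ1 : θ ≤ 1) (hE : 1 < E)
    (hp : 0 < p) (hq : 0 < q) (h1 : p ≤ E * q) (h2 : q ≤ E * p) :
    (q - p) ^ 2 / ((1 - θ) * p + θ * q) ≤
      ((E - 1) ^ 2 / (((1 - θ) * (E - 1) + 1) * (θ * (E - 1) + 1))) * (θ * p + (1 - θ) * q) := by
  have hA : 0 < (1 - θ) * (E - 1) + 1 := by
    nlinarith [mul_nonneg (sub_nonneg.2 hθ1) (le_of_lt (sub_pos.2 hE))]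
  have hB : 0 < θ * (E - 1) + 1 := by
    nlinarith [mul_nonneg hθ0 (le_of_lt (sub_pos.2 hE))]
  have hD : 0 < (1 - θ) * p + θ * q := by
    rcases le_total p q with h | h
    · nlinarith [mul_nonneg hθ0 (sub_nonneg.2 h)]
    · nlinarith [mul_nonneg (sub_nonneg.2 hθ1) (sub_nonneg.2 h)]
  have hAB : 0 < ((1 - θ) * (E - 1) + 1) * (θ * (E - 1) + 1) := mul_pos hA hB
  have heq : ((E - 1) ^ 2 / (((1 - θ) * (E - 1) + 1) * (θ * (E - 1) + 1))) * (θ * p + (1 - θ) * q)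
      = ((E - 1) ^ 2 * (θ * p + (1 - θ) * q)) / (((1 - θ) * (E - 1) + 1) * (θ * (E - 1) + 1)) := by
    ring
  rw [heq, div_le_div_iff₀ hD hAB]
  nlinarith [mul_nonneg (sub_nonneg.2 h1) (sub_nonneg.2 h2)]

lemma upper_bound13 (θ ε : ℝ) (hθ0 : 0 ≤ θ) (hθ1 : θ ≤ 1) (hε : 0 < ε)
    {d : ℕ} (p q : Fin d → ℝ) (hp : IsProbVec p) (hq : IsProbVec q)
    (hpp : ∀ k, 0 < p k) (hqp : ∀ k, 0 < q k)
    (hdp : ∀ k, p k ≤ Real.exp ε * q k ∧ q k ≤ Real.exp ε * p k) :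
    Jc θ p q ≤ (Real.exp ε - 1) ^ 2 /
      (((1 - θ) * (Real.exp ε - 1) + 1) * (θ * (Real.exp ε - 1) + 1)) := by
  have hE : 1 < Real.exp ε := by
    have := Real.add_one_le_exp ε; linarith
  set E := Real.exp ε with hEdef
  set c := (E - 1) ^ 2 / (((1 - θ) * (E - 1) + 1) * (θ * (E - 1) + 1)) with hc
  have hb : ∀ k, (q k - p k) ^ 2 / ((1 - θ) * p k + θ * q k) ≤ c * (θ * p k + (1 - θ) * q k) :=
    fun k => key_ineq_s13 θ E (p k) (q k) hθ0 hθ1 hE (hpp k) (hqp k) (hdp k).1 (hdp k).2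
  calc Jc θ p q ≤ ∑ k, c * (θ * p k + (1 - θ) * q k) :=
        Finset.sum_le_sum fun k _ => hb k
    _ = ∑ k, c * θ * p k + ∑ k, c * (1 - θ) * q k := by
        rw [← Finset.sum_add_distrib]
        exact Finset.sum_congr rfl fun k _ => by ring
    _ = c * θ * 1 + c * (1 - θ) * 1 := by
        rw [← Finset.mul_sum, ← Finset.mul_sum, hp.2, hq.2]
    _ = c := by ring

/-- for `θ ∈ [0,1]` and `ε > 0`, with `s = e^ε − 1`,
`M_2^C(ε;J_θ) = s²/(((1−θ)s+1)(θs+1))`. -/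
theorem statement13 (θ ε : ℝ) (hθ : θ ∈ Set.Icc (0 : ℝ) 1) (hε : 0 < ε) :
    M2C ε θ = (Real.exp ε - 1) ^ 2 /
      (((1 - θ) * (Real.exp ε - 1) + 1) * (θ * (Real.exp ε - 1) + 1)) := by
  obtain ⟨hθ0, hθ1⟩ := hθ
  have hE : 1 < Real.exp ε := by
    have := Real.add_one_le_exp ε; linarith
  set E := Real.exp ε with hEdef
  have hE1 : (0:ℝ) < E + 1 := by linarith
  have hE1' : E + 1 ≠ 0 := ne_of_gt hE1
  have hA : 0 < (1 - θ) * (E - 1) + 1 := by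
    nlinarith [mul_nonneg (sub_nonneg.2 hθ1) (le_of_lt (sub_pos.2 hE))]
  have hB : 0 < θ * (E - 1) + 1 := by
    nlinarith [mul_nonneg hθ0 (le_of_lt (sub_pos.2 hE))]
  set p : Fin 2 → ℝ := ![E / (E + 1), 1 / (E + 1)] with hpdef
  set q : Fin 2 → ℝ := ![1 / (E + 1), E / (E + 1)] with hqdef
  have hpv : IsProbVec p := by
    constructor
    · intro k; fin_cases k <;> simp [hpdef] <;> positivity
    · rw [hpdef, Fin.sum_univ_two]
      simp only [Matrix.cons_val_zero, Matrix.cons_val_one, Matrix.head_cons]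
      rw [← add_div, div_self hE1']
  have hqv : IsProbVec q := by
    constructor
    · intro k; fin_cases k <;> simp [hqdef] <;> positivity
    · rw [hqdef, Fin.sum_univ_two]
      simp only [Matrix.cons_val_zero, Matrix.cons_val_one, Matrix.head_cons]
      rw [← add_div, add_comm, div_self hE1']
  have hppos : ∀ k, 0 < p k := by intro k; fin_cases k <;> simp [hpdef] <;> positivity
  have hqpos : ∀ k, 0 < q k := by intro k; fin_cases k <;> simp [hqdef] <;> positivity
  have haux : ∀ a b : ℝ, a ≤ E * b → a / (E + 1) ≤ E * (b / (E + 1)) := by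
    intro a b h
    rw [← mul_div_assoc]
    exact (div_le_div_iff_of_pos_right hE1).2 h
  have hdp : ∀ k, p k ≤ E * q k ∧ q k ≤ E * p k := by
    intro k
    fin_cases k <;>
      simp only [hpdef, hqdef, Matrix.cons_val_zero, Matrix.cons_val_one, Matrix.head_cons] <;>
      exact ⟨haux _ _ (by nlinarith), haux _ _ (by nlinarith)⟩
  have hJ : Jc θ p q = (E - 1) ^ 2 /
      (((1 - θ) * (E - 1) + 1) * (θ * (E - 1) + 1)) := by
    have hd1 : (1 - θ) * (E / (E + 1)) + θ * (1 / (E + 1)) = ((1 - θ) * (E - 1) + 1) / (E + 1) := by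
      field_simp; ring
    have hd2 : (1 - θ) * (1 / (E + 1)) + θ * (E / (E + 1)) = (θ * (E - 1) + 1) / (E + 1) := by
      field_simp; ring
    rw [Jc, Fin.sum_univ_two]
    simp only [hpdef, hqdef, Matrix.cons_val_zero, Matrix.cons_val_one, Matrix.head_cons]
    rw [hd1, hd2]
    rw [div_sub_div_same, div_sub_div_same, div_pow, div_pow]
    rw [div_div_div_eq, div_div_div_eq]
    rw [div_add_div _ _ (by positivity) (by positivity),
      div_eq_div_iff (by positivity) (ne_of_gt (mul_pos hA hB))]
    ring
  have hmem : (E - 1) ^ 2 / (((1 - θ) * (E - 1) + 1) * (θ * (E - 1) + 1)) ∈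
      {x : ℝ | ∃ (d : ℕ) (p q : Fin d → ℝ),
        IsProbVec p ∧ IsProbVec q ∧ (∀ k, 0 < p k) ∧ (∀ k, 0 < q k) ∧
        (∀ k, p k ≤ Real.exp ε * q k ∧ q k ≤ Real.exp ε * p k) ∧ x = Jc θ p q} :=
    ⟨2, p, q, hpv, hqv, hppos, hqpos, hdp, hJ.symm⟩
  have hub : ∀ x ∈ {x : ℝ | ∃ (d : ℕ) (p q : Fin d → ℝ),
        IsProbVec p ∧ IsProbVec q ∧ (∀ k, 0 < p k) ∧ (∀ k, 0 < q k) ∧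
        (∀ k, p k ≤ Real.exp ε * q k ∧ q k ≤ Real.exp ε * p k) ∧ x = Jc θ p q},
      x ≤ (E - 1) ^ 2 / (((1 - θ) * (E - 1) + 1) * (θ * (E - 1) + 1)) := by
    rintro x ⟨d, p', q', hp', hq', hpp', hqp', hdp', rfl⟩
    exact upper_bound13 θ ε hθ0 hθ1 hε p' q' hp' hq' hpp' hqp' hdp'
  rw [M2C]
  exact le_antisymm (csSup_le ⟨_, hmem⟩ hub) (le_csSup ⟨_, hub⟩ hmem)

end
end

section
/- Let d ≥ 2 be an integer, c ∈ [1/d, 1) and ε, t > 0 real numbers, and let (u_1,…,u_{d+1}) be unit vectors in ℂ^d with |⟨u_i,u_j⟩| = c for all i ≠ j. Define density matrices ρ_i = (1/(d+t))(I_d + t|u_i⟩⟨u_i|) for i = 1,…,d+1. If D = (e^ε − 1)² + 4(1−c²)e^ε and 0 < t ≤ t_max := 2(e^ε − 1)/(√D + 1 − e^ε), then (ρ_1,…,ρ_{d+1}) is CQ ε-DP. -/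
open scoped BigOperators Classical ComplexOrder
open Matrix

noncomputable section

/-! ### Auxiliary lemmas for statement15 -/

local notation "⟪" x ", " y "⟫" => @inner ℂ _ _ x y

lemma st15_arith (E r X Y : ℝ) (hr : 0 ≤ r) (hXY : X ≤ E * Y) :
    0 ≤ E * (r * Y) - r * X := by
  nlinarith [mul_le_mul_of_nonneg_left hXY hr]

lemma st15_aux_det (E c t D : ℝ) (hE : 1 < E) (hc0 : 0 ≤ c) (hc1 : c < 1) (ht : 0 < t)
    (hD : D = (E - 1) ^ 2 + 4 * (1 - c ^ 2) * E)
    (htm : t ≤ 2 * (E - 1) / (Real.sqrt D + 1 - E)) :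
    (1 - c ^ 2) * E * t ^ 2 ≤ (E - 1) ^ 2 * (1 + t) := by
  have hE0 : (0:ℝ) < E := by linarith
  have hc2 : 0 < 1 - c ^ 2 := by nlinarith
  have hDpos : 0 < D := by nlinarith [sq_nonneg (E - 1)]
  set s := Real.sqrt D with hs
  have hs2 : s ^ 2 = D := Real.sq_sqrt hDpos.le
  have hs0 : 0 ≤ s := Real.sqrt_nonneg D
  have hsE : E - 1 < s := by nlinarith
  have hden : 0 < s + 1 - E := by linarith
  have h1 : t * (s + 1 - E) ≤ 2 * (E - 1) := by
    rw [div_eq_mul_inv] at htm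
    calc t * (s + 1 - E) ≤ 2 * (E - 1) * (s + 1 - E)⁻¹ * (s + 1 - E) :=
          mul_le_mul_of_nonneg_right htm hden.le
      _ = 2 * (E - 1) := by field_simp
  have h2 : 0 ≤ t * s := mul_nonneg ht.le hs0
  have h3 : t * s ≤ (E - 1) * (2 + t) := by nlinarith
  have h4 : (t * s) ^ 2 ≤ ((E - 1) * (2 + t)) ^ 2 := by nlinarith
  nlinarith [h4, hs2]

lemma st15_aux_quad (E c t a b N : ℝ) (hE : 1 < E) (hc0 : 0 ≤ c) (hc1 : c < 1) (ht : 0 < t)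
    (hdet : (1 - c ^ 2) * E * t ^ 2 ≤ (E - 1) ^ 2 * (1 + t))
    (hab : a ^ 2 + b ^ 2 ≤ N) :
    t * (c * a + Real.sqrt (1 - c ^ 2) * b) ^ 2 ≤ (E - 1) * N + t * E * a ^ 2 := by
  have hc2 : (0:ℝ) ≤ 1 - c ^ 2 := by nlinarith
  set s := Real.sqrt (1 - c ^ 2) with hs
  have hs2 : s ^ 2 = 1 - c ^ 2 := Real.sq_sqrt hc2
  have hs0 : 0 ≤ s := Real.sqrt_nonneg _
  have hA : 0 < E - 1 + t * (E - c ^ 2) := by nlinarith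
  have hid : (E - 1 + t * (E - c ^ 2)) * ((E - 1) * (a ^ 2 + b ^ 2) + t * E * a ^ 2
        - t * (c * a + s * b) ^ 2)
      = ((E - 1 + t * (E - c ^ 2)) * a - t * c * s * b) ^ 2
        + ((E - 1) ^ 2 * (1 + t) - t ^ 2 * (1 - c ^ 2) * E) * b ^ 2 := by
    linear_combination ((-(E - 1 + t * (E - c ^ 2)) * t - t ^ 2 * c ^ 2) * b ^ 2) * hs2
  have h5 : 0 ≤ ((E - 1 + t * (E - c ^ 2)) * a - t * c * s * b) ^ 2
      + ((E - 1) ^ 2 * (1 + t) - t ^ 2 * (1 - c ^ 2) * E) * b ^ 2 :=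
    add_nonneg (sq_nonneg _) (mul_nonneg (by nlinarith [hdet]) (sq_nonneg b))
  have key : t * (c * a + s * b) ^ 2 ≤ (E - 1) * (a ^ 2 + b ^ 2) + t * E * a ^ 2 := by
    nlinarith [hid, h5, hA]
  nlinarith [key, hab]

lemma st15_inner_bound {F : Type*} [NormedAddCommGroup F] [InnerProductSpace ℂ F]
    (a b x : F) (c : ℝ) (ha : ‖a‖ = 1) (hb : ‖b‖ = 1) (hab : ‖⟪a, b⟫‖ = c) :
    ‖⟪b, x⟫‖ ≤ c * ‖⟪a, x⟫‖
      + Real.sqrt (1 - c ^ 2) * Real.sqrt (‖x‖ ^ 2 - ‖⟪a, x⟫‖ ^ 2) := by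
  set g : ℂ := ⟪a, b⟫ with hg
  set p : ℂ := ⟪a, x⟫ with hp
  set w : F := b - g • a with hw
  set y : F := x - p • a with hy
  have haa : ⟪a, a⟫ = 1 := by
    rw [inner_self_eq_norm_sq_to_K, ha]; norm_num
  have hba : ⟪b, a⟫ = starRingEnd ℂ g := by rw [hg, inner_conj_symm]
  have hxa : ⟪x, a⟫ = starRingEnd ℂ p := by rw [hp, inner_conj_symm]
  have hbx : ⟪b, x⟫ = starRingEnd ℂ g * p + ⟪w, y⟫ := by
    have h1 : ⟪w, y⟫ = ⟪b, x⟫ - starRingEnd ℂ g * p := by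
      simp only [hw, hy, inner_sub_left, inner_sub_right, inner_smul_left,
        inner_smul_right, haa, hba, ← hp, mul_one]
      ring
    rw [h1]; ring
  have hwn : ‖w‖ ^ 2 = 1 - c ^ 2 := by
    have h2 := norm_sub_sq (𝕜 := ℂ) b (g • a)
    rw [← hw] at h2
    rw [h2, inner_smul_right, hba, norm_smul, ha, hb]
    simp only [Complex.mul_conj, Complex.normSq_eq_norm_sq, hab,
      Complex.ofReal_pow, Complex.re_ofNat]
    simp only [RCLike.re_to_complex, ← Complex.ofReal_pow, Complex.ofReal_re]
    ring
  have hyn : ‖y‖ ^ 2 = ‖x‖ ^ 2 - ‖p‖ ^ 2 := by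
    have h2 := norm_sub_sq (𝕜 := ℂ) x (p • a)
    rw [← hy] at h2
    rw [h2, inner_smul_right, hxa, norm_smul, ha]
    simp only [Complex.mul_conj, Complex.normSq_eq_norm_sq]
    simp only [RCLike.re_to_complex, ← Complex.ofReal_pow, Complex.ofReal_re]
    ring
  calc ‖⟪b, x⟫‖ ≤ ‖starRingEnd ℂ g * p‖ + ‖⟪w, y⟫‖ := by
        rw [hbx]; exact norm_add_le _ _
    _ ≤ c * ‖p‖ + ‖w‖ * ‖y‖ := by
        gcongr
        · rw [norm_mul, Complex.norm_conj, hab]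
        · exact norm_inner_le_norm w y
    _ ≤ _ := by
        gcongr
        · rw [← Real.sqrt_sq (norm_nonneg w), hwn]
        · rw [← Real.sqrt_sq (norm_nonneg y), hyn]

lemma st15_formP {n : Type*} [Fintype n] (v x : n → ℂ) :
    star x ⬝ᵥ ((Matrix.of fun a b => v a * starRingEnd ℂ (v b)) *ᵥ x)
      = ((‖∑ k, starRingEnd ℂ (v k) * x k‖ ^ 2 : ℝ) : ℂ) := by
  have h : star x ⬝ᵥ ((Matrix.of fun a b => v a * starRingEnd ℂ (v b)) *ᵥ x)
      = (starRingEnd ℂ (∑ k, starRingEnd ℂ (v k) * x k)) * (∑ k, starRingEnd ℂ (v k) * x k) := by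
    simp only [dotProduct, mulVec, Matrix.of_apply, Pi.star_apply, Complex.star_def, map_sum,
      _root_.map_mul, Complex.conj_conj]
    rw [Finset.sum_mul_sum]
    refine Finset.sum_congr rfl fun a _ => ?_
    rw [Finset.mul_sum]
    exact Finset.sum_congr rfl fun b _ => by ring
  rw [h, ← Complex.normSq_eq_conj_mul_self, Complex.normSq_eq_norm_sq, Complex.ofReal_pow]

lemma st15_form1 {n : Type*} [Fintype n] [DecidableEq n] (x : n → ℂ) :
    star x ⬝ᵥ ((1 : Matrix n n ℂ) *ᵥ x) = ((∑ k, ‖x k‖ ^ 2 : ℝ) : ℂ) := by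
  simp only [Matrix.one_mulVec, dotProduct, Pi.star_apply, Complex.star_def]
  push_cast
  exact Finset.sum_congr rfl fun k _ => by
    rw [← Complex.normSq_eq_conj_mul_self, Complex.normSq_eq_norm_sq, Complex.ofReal_pow]


/-- with `d+1` unit vectors `u_i ∈ ℂ^d` of pairwise `|⟨u_i,u_j⟩| = c`, where
`c ∈ [1/d, 1)`, the tuple `ρ_i = (1/(d+t))(I_d + t|u_i⟩⟨u_i|)` is CQ `ε`-DP whenever
`0 < t ≤ 2(e^ε−1)/(√D+1−e^ε)`, where `D = (e^ε−1)² + 4(1−c²)e^ε`. -/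
theorem statement15 (d : ℕ) (hd : 2 ≤ d) (c ε t : ℝ)
    (hc0 : 1 / (d : ℝ) ≤ c) (hc1 : c < 1) (hε : 0 < ε) (ht : 0 < t)
    (u : Fin (d + 1) → Fin d → ℂ)
    (hu : ∀ i, ∑ k, ‖u i k‖ ^ 2 = 1)
    (huv : ∀ i j, i ≠ j → ‖∑ k, starRingEnd ℂ (u i k) * u j k‖ = c)
    (D : ℝ) (hD : D = (Real.exp ε - 1) ^ 2 + 4 * (1 - c ^ 2) * Real.exp ε)
    (htmax : t ≤ 2 * (Real.exp ε - 1) / (Real.sqrt D + 1 - Real.exp ε)) :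
    IsCQDP ε (fun i => ((d : ℝ) + t)⁻¹ •
      ((1 : Matrix (Fin d) (Fin d) ℂ) +
        t • Matrix.of fun a b => u i a * starRingEnd ℂ (u i b))) := by
  have hE : 1 < Real.exp ε := by
    calc (1:ℝ) = Real.exp 0 := Real.exp_zero.symm
      _ < Real.exp ε := Real.exp_lt_exp.2 hε
  have hd0 : (0:ℝ) < (d:ℝ) := by
    have h2d : (2:ℝ) ≤ (d:ℝ) := by exact_mod_cast hd
    linarith
  have hc0' : 0 < c := lt_of_lt_of_le (by positivity) hc0
  have hdt : (0:ℝ) < (d:ℝ) + t := by linarith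
  have hrpos : 0 < ((d:ℝ) + t)⁻¹ := by positivity
  have hdet := st15_aux_det (Real.exp ε) c t D hE hc0'.le hc1 ht hD htmax
  have hermP : ∀ i : Fin (d+1),
      (Matrix.of fun a b => u i a * starRingEnd ℂ (u i b) :
        Matrix (Fin d) (Fin d) ℂ).IsHermitian := by
    intro i
    ext a b
    simp only [Matrix.conjTranspose_apply, Matrix.of_apply, Complex.star_def,
      _root_.map_mul, Complex.conj_conj]
    ring
  have hermρ : ∀ i : Fin (d+1),
      (((d:ℝ) + t)⁻¹ • ((1 : Matrix (Fin d) (Fin d) ℂ)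
        + t • Matrix.of fun a b => u i a * starRingEnd ℂ (u i b))).IsHermitian := by
    intro i
    rw [Matrix.IsHermitian, Matrix.conjTranspose_smul, star_trivial, Matrix.conjTranspose_add,
      Matrix.conjTranspose_one, Matrix.conjTranspose_smul, star_trivial, hermP i]
  have formρ : ∀ (i : Fin (d+1)) (x : Fin d → ℂ),
      star x ⬝ᵥ ((((d:ℝ) + t)⁻¹ • ((1 : Matrix (Fin d) (Fin d) ℂ)
          + t • Matrix.of fun a b => u i a * starRingEnd ℂ (u i b))) *ᵥ x)
        = ((((d:ℝ) + t)⁻¹ * ((∑ k, ‖x k‖ ^ 2)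
            + t * ‖∑ k, starRingEnd ℂ (u i k) * x k‖ ^ 2) : ℝ) : ℂ) := by
    intro i x
    rw [Matrix.smul_mulVec, Matrix.add_mulVec, Matrix.smul_mulVec,
      dotProduct_smul, dotProduct_add, dotProduct_smul, st15_form1, st15_formP,
      Complex.real_smul, Complex.real_smul]
    push_cast
    ring
  have normU : ∀ i, ‖(WithLp.equiv 2 (Fin d → ℂ)).symm (u i)‖ = 1 := by
    intro i
    rw [EuclideanSpace.norm_eq]
    simp only [WithLp.equiv_symm_apply, PiLp.toLp_apply]
    rw [hu i, Real.sqrt_one]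
  have innerU : ∀ i j, ⟪(WithLp.equiv 2 (Fin d → ℂ)).symm (u i),
      (WithLp.equiv 2 (Fin d → ℂ)).symm (u j)⟫ = ∑ k, starRingEnd ℂ (u i k) * u j k := by
    intro i j
    simp [PiLp.inner_apply, RCLike.inner_apply, mul_comm]
  have innerX : ∀ (i : Fin (d+1)) (x : Fin d → ℂ),
      ⟪(WithLp.equiv 2 (Fin d → ℂ)).symm (u i), (WithLp.equiv 2 (Fin d → ℂ)).symm x⟫
        = ∑ k, starRingEnd ℂ (u i k) * x k := by
    intro i x
    simp [PiLp.inner_apply, RCLike.inner_apply, mul_comm]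
  have normX : ∀ x : Fin d → ℂ,
      ‖(WithLp.equiv 2 (Fin d → ℂ)).symm x‖ ^ 2 = ∑ k, ‖x k‖ ^ 2 := by
    intro x
    rw [EuclideanSpace.norm_eq, Real.sq_sqrt (by positivity)]
    simp
  have keyIneq : ∀ i j, i ≠ j → ∀ x : Fin d → ℂ,
      (∑ k, ‖x k‖ ^ 2) + t * ‖∑ k, starRingEnd ℂ (u i k) * x k‖ ^ 2
        ≤ Real.exp ε * ((∑ k, ‖x k‖ ^ 2)
            + t * ‖∑ k, starRingEnd ℂ (u j k) * x k‖ ^ 2) := by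
    intro i j hij x
    have hN0 : (0:ℝ) ≤ ∑ k, ‖x k‖ ^ 2 := by positivity
    have hXn := normX x
    have hαle : ‖∑ k, starRingEnd ℂ (u j k) * x k‖ ^ 2
        ≤ ∑ k, ‖x k‖ ^ 2 := by
      have h := norm_inner_le_norm (𝕜 := ℂ) ((WithLp.equiv 2 (Fin d → ℂ)).symm (u j))
        ((WithLp.equiv 2 (Fin d → ℂ)).symm x)
      rw [normU j, one_mul, innerX j x] at h
      have h0 := norm_nonneg (∑ k, starRingEnd ℂ (u j k) * x k)
      nlinarith [h, hXn]
    have hbound := st15_inner_bound ((WithLp.equiv 2 (Fin d → ℂ)).symm (u j))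
      ((WithLp.equiv 2 (Fin d → ℂ)).symm (u i)) ((WithLp.equiv 2 (Fin d → ℂ)).symm x) c
      (normU j) (normU i) (by rw [innerU j i]; exact huv j i hij.symm)
    rw [innerX i x, innerX j x, hXn] at hbound
    have hβ2 : Real.sqrt ((∑ k, ‖x k‖ ^ 2)
          - ‖∑ k, starRingEnd ℂ (u j k) * x k‖ ^ 2) ^ 2
        = (∑ k, ‖x k‖ ^ 2)
          - ‖∑ k, starRingEnd ℂ (u j k) * x k‖ ^ 2 :=
      Real.sq_sqrt (by linarith)
    have hA0 : 0 ≤ ‖∑ k, starRingEnd ℂ (u i k) * x k‖ := norm_nonneg _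
    have hA_le := pow_le_pow_left₀ hA0 hbound 2
    have hquad := st15_aux_quad (Real.exp ε) c t
      (‖∑ k, starRingEnd ℂ (u j k) * x k‖)
      (Real.sqrt ((∑ k, ‖x k‖ ^ 2)
        - ‖∑ k, starRingEnd ℂ (u j k) * x k‖ ^ 2))
      (∑ k, ‖x k‖ ^ 2) hE hc0'.le hc1 ht hdet (by rw [hβ2]; linarith)
    nlinarith [mul_le_mul_of_nonneg_left hA_le ht.le, hquad]
  have traceρ : ∀ i : Fin (d+1),
      (((d:ℝ) + t)⁻¹ • ((1 : Matrix (Fin d) (Fin d) ℂ)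
        + t • Matrix.of fun a b => u i a * starRingEnd ℂ (u i b))).trace = 1 := by
    intro i
    have htrP : (Matrix.of fun a b => u i a * starRingEnd ℂ (u i b) :
        Matrix (Fin d) (Fin d) ℂ).trace = 1 := by
      simp only [Matrix.trace, Matrix.diag, Matrix.of_apply, Complex.mul_conj,
        Complex.normSq_eq_norm_sq]
      rw [← Complex.ofReal_sum]
      norm_cast
      exact hu i
    rw [Matrix.trace_smul, Matrix.trace_add, Matrix.trace_smul, htrP, Matrix.trace_one]
    have hr1 : ((d:ℝ) + t)⁻¹ * ((d:ℝ) + t) = 1 := inv_mul_cancel₀ hdt.ne'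
    simp only [Fintype.card_fin, smul_eq_mul, mul_one, Complex.real_smul]
    push_cast
    exact_mod_cast congrArg (Complex.ofReal) hr1
  constructor
  · intro i
    refine ⟨Matrix.PosSemidef.of_dotProduct_mulVec_nonneg (hermρ i) fun x => ?_, traceρ i⟩
    rw [formρ i x, Complex.zero_le_real]
    have h1 : (0:ℝ) ≤ ∑ k, ‖x k‖ ^ 2 := by positivity
    have h2 : (0:ℝ) ≤ ‖∑ k, starRingEnd ℂ (u i k) * x k‖ ^ 2 := sq_nonneg _
    exact mul_nonneg hrpos.le (add_nonneg h1 (mul_nonneg ht.le h2))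
  · intro i j
    refine Matrix.PosSemidef.of_dotProduct_mulVec_nonneg ?_ fun x => ?_
    · rw [Matrix.IsHermitian, Matrix.conjTranspose_sub, Matrix.conjTranspose_smul,
        star_trivial, hermρ j, hermρ i]
    · rw [Matrix.sub_mulVec, dotProduct_sub, Matrix.smul_mulVec, dotProduct_smul,
        formρ j x, formρ i x, Complex.real_smul, ← Complex.ofReal_mul, ← Complex.ofReal_sub,
        Complex.zero_le_real]
      have h1 : (0:ℝ) ≤ ∑ k, ‖x k‖ ^ 2 := by positivity
      rcases eq_or_ne i j with rfl | hij
      · have h2 : (0:ℝ) ≤ ‖∑ k, starRingEnd ℂ (u i k) * x k‖ ^ 2 := sq_nonneg _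
        exact st15_arith _ _ _ _ hrpos.le
          (le_mul_of_one_le_left (add_nonneg h1 (mul_nonneg ht.le h2)) hE.le)
      · exact st15_arith _ _ _ _ hrpos.le (keyIneq i j hij x)

end
end

section
/- Let ε > 0 and c ∈ [1/2, 1) be real numbers, set D = (e^ε − 1)² + 4(1−c²)e^ε and t_max = 2(e^ε − 1)/(√D + 1 − e^ε), let u_1, u_2, u_3 be unit vectors in ℂ² with |⟨u_i,u_j⟩| = c for all i ≠ j, and define ρ_i = (1/(2+t_max))(I_2 + t_max|u_i⟩⟨u_i|) for i = 1,2,3. Then for every integer n ≥ 3, every CQ ε-DP n-tuple (σ_1,…,σ_n) of density matrices with σ_1 = ρ_1, σ_2 = ρ_2, σ_3 = ρ_3 does not lie in EC_n(ε). -/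
open scoped BigOperators Classical ComplexOrder
open Matrix

noncomputable section

lemma ker_of_det {M : Matrix (Fin 2) (Fin 2) ℂ} (hH : M.IsHermitian) (hdet : M.det = 0) :
    ∃ v : Fin 2 → ℂ, v ≠ 0 ∧ M.mulVec v = 0 := by
  rw [Matrix.det_fin_two] at hdet
  by_cases h : M 0 0 = 0 ∧ M 0 1 = 0
  · refine ⟨![1, 0], ?_, ?_⟩
    · intro hv
      have := congrFun hv 0
      simp at this
    · have h10 : M 1 0 = 0 := by
        have := hH.apply 1 0
        rw [← this]
        simp [h.2]
      funext i
      fin_cases i <;>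
        simp [Matrix.mulVec, dotProduct, Fin.sum_univ_two, h.1, h.2, h10]
  · refine ⟨![-(M 0 1), M 0 0], ?_, ?_⟩
    · intro hv
      apply h
      constructor
      · have := congrFun hv 1
        simpa using this
      · have := congrFun hv 0
        simpa using this
    · funext i
      fin_cases i <;>
        simp [Matrix.mulVec, dotProduct, Fin.sum_univ_two]
      · ring
      · linear_combination hdet

lemma zero_of_two_ker {τ : Matrix (Fin 2) (Fin 2) ℂ} {v w : Fin 2 → ℂ}
    (hd : v 0 * w 1 - v 1 * w 0 ≠ 0) (hv : τ.mulVec v = 0) (hw : τ.mulVec w = 0) :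
    τ = 0 := by
  ext a b
  have h1 : τ a 0 * v 0 + τ a 1 * v 1 = 0 := by
    have := congrFun hv a
    simpa [Matrix.mulVec, dotProduct, Fin.sum_univ_two] using this
  have h2 : τ a 0 * w 0 + τ a 1 * w 1 = 0 := by
    have := congrFun hw a
    simpa [Matrix.mulVec, dotProduct, Fin.sum_univ_two] using this
  have hb0 : τ a 0 * (v 0 * w 1 - v 1 * w 0) = 0 := by linear_combination w 1 * h1 - v 1 * h2
  have hb1 : τ a 1 * (v 0 * w 1 - v 1 * w 0) = 0 := by linear_combination v 0 * h2 - w 0 * h1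
  fin_cases b
  · simpa [hd] using mul_eq_zero.mp hb0
  · simpa [hd] using mul_eq_zero.mp hb1

lemma det_scalar (E T C w α β γ δ α' β' γ' δ' : ℂ)
    (h1 : α * α' + β * β' = 1)
    (h2 : γ * γ' + δ * δ' = 1)
    (h3 : (α' * γ + β' * δ) * (α * γ' + β * δ') = C ^ 2)
    (hkey : (E - 1) ^ 2 * (1 + T) - T ^ 2 * E * (1 - C ^ 2) = 0) :
    (w * ((E - 1) + E * T * (γ * γ') - T * (α * α'))) *
      (w * ((E - 1) + E * T * (δ * δ') - T * (β * β'))) -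
    (w * (E * T * (γ * δ') - T * (α * β'))) *
      (w * (E * T * (δ * γ') - T * (β * α'))) = 0 := by
  linear_combination (w^2) * ((-(E-1)*T - T^2*E*(γ*γ'+δ*δ')) * h1
    + ((E-1)*T*E - T^2*E) * h2 + T^2*E*h3 + hkey)

lemma dotProduct_sum' {ι : Type*} (s : Finset ι) (x : Fin 2 → ℂ) (f : ι → Fin 2 → ℂ) :
    x ⬝ᵥ (∑ k ∈ s, f k) = ∑ k ∈ s, x ⬝ᵥ f k := by
  simp only [dotProduct, Finset.sum_apply, Finset.mul_sum]
  exact Finset.sum_comm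

lemma sum_mulVec' {ι : Type*} (s : Finset ι) (A : ι → Matrix (Fin 2) (Fin 2) ℂ)
    (v : Fin 2 → ℂ) : (∑ k ∈ s, A k).mulVec v = ∑ k ∈ s, (A k).mulVec v := by
  funext i
  simp only [Matrix.mulVec, dotProduct, Matrix.sum_apply, Finset.sum_apply,
    Finset.sum_mul]
  exact Finset.sum_comm

/-- the quadratic form of `(2+t)⁻¹ • (1 + t • |u⟩⟨u|)` vanishing at `v` forces `v = 0`. -/
lemma vec_zero (t : ℝ) (ht : 0 < t) (uu : Fin 2 → ℂ) (v : Fin 2 → ℂ)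
    (h : star v ⬝ᵥ (((2:ℝ)+t)⁻¹ •
      ((1 : Matrix (Fin 2) (Fin 2) ℂ) +
        t • Matrix.of fun a b => uu a * starRingEnd ℂ (uu b))).mulVec v = 0) : v = 0 := by
  have h2t : ((2:ℂ) + (t:ℂ)) ≠ 0 := by
    have : (0:ℝ) < 2 + t := by linarith
    exact_mod_cast ne_of_gt (show (0:ℂ) < ((2+t:ℝ):ℂ) by exact_mod_cast this)
  simp only [Matrix.mulVec, dotProduct, Matrix.smul_apply, Matrix.add_apply,
    Matrix.one_apply, Matrix.of_apply, Fin.sum_univ_two, Pi.star_apply,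
    Complex.real_smul, smul_eq_mul, if_true, one_ne_zero, zero_ne_one, if_false,
    Fin.isValue, Complex.star_def] at h
  push_cast at h
  field_simp at h
  have key : starRingEnd ℂ (v 0) * v 0 + starRingEnd ℂ (v 1) * v 1 +
      (t:ℂ) * ((starRingEnd ℂ (v 0) * uu 0 + starRingEnd ℂ (v 1) * uu 1) *
        starRingEnd ℂ (starRingEnd ℂ (v 0) * uu 0 + starRingEnd ℂ (v 1) * uu 1)) = 0 := by
    simp only [_root_.map_add, _root_.map_mul, Complex.conj_conj]
    linear_combination h
  rw [mul_comm (starRingEnd ℂ (v 0)) (v 0), mul_comm (starRingEnd ℂ (v 1)) (v 1),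
    Complex.mul_conj, Complex.mul_conj, Complex.mul_conj] at key
  have keyR : Complex.normSq (v 0) + Complex.normSq (v 1) +
      t * Complex.normSq (starRingEnd ℂ (v 0) * uu 0 + starRingEnd ℂ (v 1) * uu 1) = 0 := by
    exact_mod_cast key
  have h0 : Complex.normSq (v 0) = 0 := by
    nlinarith [Complex.normSq_nonneg (v 0), Complex.normSq_nonneg (v 1),
      Complex.normSq_nonneg (starRingEnd ℂ (v 0) * uu 0 + starRingEnd ℂ (v 1) * uu 1)]
  have h1 : Complex.normSq (v 1) = 0 := by
    nlinarith [Complex.normSq_nonneg (v 0), Complex.normSq_nonneg (v 1),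
      Complex.normSq_nonneg (starRingEnd ℂ (v 0) * uu 0 + starRingEnd ℂ (v 1) * uu 1)]
  funext i
  fin_cases i
  · exact Complex.normSq_eq_zero.mp h0
  · exact Complex.normSq_eq_zero.mp h1


lemma dep_vec {v w : Fin 2 → ℂ} (hv : v ≠ 0) (hw : w ≠ 0)
    (hd : v 0 * w 1 - v 1 * w 0 = 0) : ∃ lam : ℂ, lam ≠ 0 ∧ w = lam • v := by
  by_cases h0 : v 0 = 0
  · have h1 : v 1 ≠ 0 := by
      intro h
      exact hv (by funext a; fin_cases a <;> simp [h0, h])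
    refine ⟨w 1 / v 1, ?_, ?_⟩
    · intro h
      rw [div_eq_zero_iff] at h
      have hw1 : w 1 = 0 := h.resolve_right h1
      have hw0 : w 0 = 0 := by
        have : v 1 * w 0 = 0 := by linear_combination -hd + w 1 * h0
        exact (mul_eq_zero.mp this).resolve_left h1
      exact hw (by funext a; fin_cases a <;> simp [hw0, hw1])
    · funext a
      fin_cases a <;> simp [Pi.smul_apply, smul_eq_mul]
      · rw [h0, mul_zero]
        have : v 1 * w 0 = 0 := by linear_combination -hd + w 1 * h0
        exact (mul_eq_zero.mp this).resolve_left h1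
      · field_simp
  · refine ⟨w 0 / v 0, ?_, ?_⟩
    · intro h
      rw [div_eq_zero_iff] at h
      have hw0 : w 0 = 0 := h.resolve_right h0
      have hw1 : w 1 = 0 := by
        have : v 0 * w 1 = 0 := by linear_combination hd + v 1 * hw0
        exact (mul_eq_zero.mp this).resolve_left h0
      exact hw (by funext a; fin_cases a <;> simp [hw0, hw1])
    · funext a
      fin_cases a <;> simp [Pi.smul_apply, smul_eq_mul]
      · field_simp
      · field_simp
        linear_combination hd

set_option maxHeartbeats 2000000 in
/-- with `ρ_1,ρ_2,ρ_3` as in Statement 16, for every `n ≥ 3`, every CQ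
`ε`-DP `n`-tuple `(σ_i)` with `σ_1 = ρ_1`, `σ_2 = ρ_2`, `σ_3 = ρ_3` is not in `EC_n(ε)`. -/

theorem statement17 (ε c : ℝ) (hε : 0 < ε) (hc0 : 1 / 2 ≤ c) (hc1 : c < 1)
    (D tmax : ℝ)
    (hD : D = (Real.exp ε - 1) ^ 2 + 4 * (1 - c ^ 2) * Real.exp ε)
    (htmax : tmax = 2 * (Real.exp ε - 1) / (Real.sqrt D + 1 - Real.exp ε))
    (u : Fin 3 → Fin 2 → ℂ)
    (hu : ∀ i, ∑ k, ‖u i k‖ ^ 2 = 1)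
    (huv : ∀ i j, i ≠ j → ‖∑ k, starRingEnd ℂ (u i k) * u j k‖ = c)
    (ρ : Fin 3 → Matrix (Fin 2) (Fin 2) ℂ)
    (hρ : ∀ i, ρ i = ((2 : ℝ) + tmax)⁻¹ •
      ((1 : Matrix (Fin 2) (Fin 2) ℂ) +
        tmax • Matrix.of fun a b => u i a * starRingEnd ℂ (u i b)))
    (n : ℕ) (hn : 3 ≤ n)
    (σ : Fin n → Matrix (Fin 2) (Fin 2) ℂ) (hσ : IsCQDP ε σ)
    (hext : ∀ i : Fin 3, σ (Fin.castLE hn i) = ρ i) :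
    ¬ InEC ε σ := by
  intro hEC
  obtain ⟨m, p, τ, ⟨hprob, hdpineq⟩, hτdm, hdecomp⟩ := hEC
  have hePos : (0:ℝ) < Real.exp ε := Real.exp_pos ε
  have he1 : 1 < Real.exp ε := by
    have := Real.add_one_le_exp ε
    linarith
  have hc2 : c ^ 2 < 1 := by nlinarith
  have hq : 0 < 1 - c ^ 2 := by linarith
  have hDpos : 0 < D := by rw [hD]; nlinarith
  have hs2 : Real.sqrt D ^ 2 = D := Real.sq_sqrt hDpos.le
  have hsgt : Real.exp ε - 1 < Real.sqrt D := by
    rw [Real.lt_sqrt (by linarith)]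
    rw [hD]; nlinarith
  have hden : 0 < Real.sqrt D + 1 - Real.exp ε := by linarith
  have ht0 : 0 < tmax := by
    rw [htmax]; exact div_pos (by linarith) hden
  have hts : tmax * (Real.sqrt D + 1 - Real.exp ε) = 2 * (Real.exp ε - 1) := by
    rw [htmax]; field_simp
  have h7 : tmax * Real.sqrt D = 2 * (Real.exp ε - 1) + tmax * (Real.exp ε - 1) := by
    linear_combination hts
  have h9 : (2 * (Real.exp ε - 1) + tmax * (Real.exp ε - 1)) ^ 2
      = tmax ^ 2 * ((Real.exp ε - 1) ^ 2 + 4 * (1 - c ^ 2) * Real.exp ε) := by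
    rw [← h7, mul_pow, hs2, hD]
  have hkey : (Real.exp ε - 1) ^ 2 * (1 + tmax) - tmax ^ 2 * Real.exp ε * (1 - c ^ 2) = 0 := by
    linear_combination (1/4 : ℝ) * h9
  have hkeyC : ((Real.exp ε : ℂ) - 1) ^ 2 * (1 + (tmax : ℂ))
      - (tmax : ℂ) ^ 2 * (Real.exp ε : ℂ) * (1 - (c : ℂ) ^ 2) = 0 := by
    have := congrArg (Complex.ofReal) hkey
    push_cast at this
    convert this using 2 <;> push_cast <;> ring
  -- unit-norm constraints as complex equations
  have h1C : ∀ i : Fin 3, u i 0 * starRingEnd ℂ (u i 0) + u i 1 * starRingEnd ℂ (u i 1) = 1 := by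
    intro i
    have := hu i
    rw [Fin.sum_univ_two] at this
    rw [Complex.mul_conj, Complex.mul_conj]
    norm_cast
    rw [← Complex.sq_norm, ← Complex.sq_norm]
    exact this
  have h3C : ∀ i j : Fin 3, i ≠ j →
      (starRingEnd ℂ (u i 0) * u j 0 + starRingEnd ℂ (u i 1) * u j 1) *
        (u i 0 * starRingEnd ℂ (u j 0) + u i 1 * starRingEnd ℂ (u j 1)) = (c : ℂ) ^ 2 := by
    intro i j hij
    have := huv i j hij
    rw [Fin.sum_univ_two] at this
    have hconj : u i 0 * starRingEnd ℂ (u j 0) + u i 1 * starRingEnd ℂ (u j 1)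
        = starRingEnd ℂ (starRingEnd ℂ (u i 0) * u j 0 + starRingEnd ℂ (u i 1) * u j 1) := by
      simp only [_root_.map_add, _root_.map_mul, Complex.conj_conj]
    rw [hconj, Complex.mul_conj]
    rw [← Complex.sq_norm, this]
    norm_cast
  -- determinant of the DP differences vanishes
  have hdet : ∀ i j : Fin 3, i ≠ j → (Real.exp ε • σ (Fin.castLE hn j) - σ (Fin.castLE hn i)).det = 0 := by
    intro i j hij
    rw [hext, hext, hρ i, hρ j, Matrix.det_fin_two]
    simp only [Matrix.smul_apply, Matrix.sub_apply, Matrix.add_apply, Matrix.one_apply,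
      Matrix.of_apply, Complex.real_smul, smul_eq_mul, Fin.isValue, if_true,
      one_ne_zero, zero_ne_one, if_false]
    simp only [Complex.ofReal_inv, Complex.ofReal_add, Complex.ofReal_ofNat]
    linear_combination ((((2:ℂ)+(tmax:ℂ))⁻¹)^2) *
      ((-( (Real.exp ε:ℂ) - 1) * (tmax:ℂ) - (tmax:ℂ)^2 * (Real.exp ε:ℂ) *
          (u j 0 * starRingEnd ℂ (u j 0) + u j 1 * starRingEnd ℂ (u j 1))) * (h1C i)
        + (((Real.exp ε:ℂ) - 1) * (tmax:ℂ) * (Real.exp ε:ℂ) - (tmax:ℂ)^2 * (Real.exp ε:ℂ)) * (h1C j)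
        + (tmax:ℂ)^2 * (Real.exp ε:ℂ) * (h3C i j hij) + hkeyC)
  -- decomposition of differences
  have hMdec : ∀ a b : Fin n, Real.exp ε • σ b - σ a
      = ∑ k, ((Real.exp ε * p b k - p a k : ℝ) : ℂ) • τ k := by
    intro a b
    rw [hdecomp a, hdecomp b, Finset.smul_sum, ← Finset.sum_sub_distrib]
    refine Finset.sum_congr rfl fun k _ => ?_
    rw [← algebraMap_smul ℂ (Real.exp ε) ((p b k : ℂ) • τ k), smul_smul, ← sub_smul]
    push_cast
    norm_num [Complex.coe_algebraMap]
  -- the key pairwise saturation claim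
  have key : ∀ i j : Fin 3, i ≠ j → ∀ k,
      p (Fin.castLE hn i) k = Real.exp ε * p (Fin.castLE hn j) k ∨
      p (Fin.castLE hn j) k = Real.exp ε * p (Fin.castLE hn i) k := by
    intro i j hij
    obtain ⟨v, hv0, hv⟩ := ker_of_det (hσ.2 (Fin.castLE hn i) (Fin.castLE hn j)).1 (hdet i j hij)
    obtain ⟨w, hw0, hw⟩ := ker_of_det (hσ.2 (Fin.castLE hn j) (Fin.castLE hn i)).1 (hdet j i hij.symm)
    have hker : ∀ (a b : Fin n) (x : Fin 2 → ℂ),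
        (Real.exp ε • σ b - σ a).mulVec x = 0 → ∀ k : Fin m,
        Real.exp ε * p b k - p a k ≠ 0 → (τ k).mulVec x = 0 := by
      intro a b x hx k hk
      have hsum : ∑ k, ((Real.exp ε * p b k - p a k : ℝ) : ℂ)
          * (star x ⬝ᵥ (τ k).mulVec x) = 0 := by
        have h0 : star x ⬝ᵥ (Real.exp ε • σ b - σ a).mulVec x = 0 := by
          rw [hx, dotProduct_zero]
        rw [hMdec a b, sum_mulVec', dotProduct_sum'] at h0
        simpa only [Matrix.smul_mulVec, dotProduct_smul, smul_eq_mul] using h0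
      have hterm : ∀ k ∈ Finset.univ, (0:ℂ) ≤ ((Real.exp ε * p b k - p a k : ℝ) : ℂ)
          * (star x ⬝ᵥ (τ k).mulVec x) := by
        intro k _
        apply mul_nonneg
        · rw [Complex.zero_le_real]
          have := hdpineq a b k
          linarith
        · exact ((hτdm k).1).dotProduct_mulVec_nonneg x
      have heach := (Finset.sum_eq_zero_iff_of_nonneg hterm).mp hsum k (Finset.mem_univ k)
      rcases mul_eq_zero.mp heach with h | h
      · exact absurd (by exact_mod_cast h) hk
      · exact (((hτdm k).1).dotProduct_mulVec_zero_iff x).mp h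
    intro k
    by_contra hkc
    push_neg at hkc
    obtain ⟨hk1, hk2⟩ := hkc
    have hτv : (τ k).mulVec v = 0 :=
      hker _ _ v hv k (fun h => hk1 (by linarith [sub_eq_zero.mp h]))
    have hτw : (τ k).mulVec w = 0 :=
      hker _ _ w hw k (fun h => hk2 (by linarith [sub_eq_zero.mp h]))
    by_cases hdind : v 0 * w 1 - v 1 * w 0 = 0
    · obtain ⟨lam, hlam, rfl⟩ := dep_vec hv0 hw0 hdind
      have hji : (Real.exp ε • σ (Fin.castLE hn i) - σ (Fin.castLE hn j)).mulVec v = 0 := by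
        have h := hw
        rw [Matrix.mulVec_smul] at h
        exact (smul_eq_zero.mp h).resolve_left hlam
      have hsumv : ((Real.exp ε - 1) • (σ (Fin.castLE hn i) + σ (Fin.castLE hn j))).mulVec v = 0 := by
        have hm : (Real.exp ε • σ (Fin.castLE hn j) - σ (Fin.castLE hn i))
            + (Real.exp ε • σ (Fin.castLE hn i) - σ (Fin.castLE hn j))
            = (Real.exp ε - 1) • (σ (Fin.castLE hn i) + σ (Fin.castLE hn j)) := by
          module
        rw [← hm, Matrix.add_mulVec, hv, hji, add_zero]
      have hsv : (σ (Fin.castLE hn i) + σ (Fin.castLE hn j)).mulVec v = 0 := by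
        rw [Matrix.smul_mulVec] at hsumv
        exact (smul_eq_zero.mp hsumv).resolve_left (by intro h; rw [sub_eq_zero] at h; linarith)
      have hdots : star v ⬝ᵥ (σ (Fin.castLE hn i)).mulVec v
          + star v ⬝ᵥ (σ (Fin.castLE hn j)).mulVec v = 0 := by
        rw [← dotProduct_add, ← Matrix.add_mulVec, hsv, dotProduct_zero]
      have hnn1 : 0 ≤ star v ⬝ᵥ (σ (Fin.castLE hn i)).mulVec v := ((hσ.1 _).1).dotProduct_mulVec_nonneg v
      have hnn2 : 0 ≤ star v ⬝ᵥ (σ (Fin.castLE hn j)).mulVec v := ((hσ.1 _).1).dotProduct_mulVec_nonneg v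
      have hz : star v ⬝ᵥ (σ (Fin.castLE hn i)).mulVec v = 0 :=
        le_antisymm (by rw [eq_neg_of_add_eq_zero_left hdots]; exact neg_nonpos.mpr hnn2) hnn1
      rw [hext i, hρ i] at hz
      exact hv0 (vec_zero tmax ht0 (u i) v hz)
    · have hτ0 := zero_of_two_ker hdind hτv hτw
      have htr := (hτdm k).2
      rw [hτ0] at htr
      simp at htr
  -- find a coordinate with positive mass
  obtain ⟨k, hk1pos⟩ : ∃ k, 0 < p (Fin.castLE hn 0) k := by
    by_contra hcon
    push_neg at hcon
    have hz : ∑ k, p (Fin.castLE hn 0) k = 0 :=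
      Finset.sum_eq_zero fun k _ => le_antisymm (hcon k) ((hprob _).1 k)
    rw [(hprob _).2] at hz
    norm_num at hz
  have hk2pos : 0 < p (Fin.castLE hn 1) k := by
    rcases ((hprob (Fin.castLE hn 1)).1 k).lt_or_eq with h | h
    · exact h
    · exfalso
      have := hdpineq (Fin.castLE hn 0) (Fin.castLE hn 1) k
      rw [← h] at this
      simp at this
      linarith
  have hk3pos : 0 < p (Fin.castLE hn 2) k := by
    rcases ((hprob (Fin.castLE hn 2)).1 k).lt_or_eq with h | h
    · exact h
    · exfalso
      have := hdpineq (Fin.castLE hn 0) (Fin.castLE hn 2) k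
      rw [← h] at this
      simp at this
      linarith
  rcases key 0 1 (by decide) k with h12 | h12 <;>
    rcases key 0 2 (by decide) k with h13 | h13 <;>
      rcases key 1 2 (by decide) k with h23 | h23 <;>
        nlinarith [hk1pos, hk2pos, hk3pos, he1, mul_pos hk2pos (sub_pos.mpr he1),
          mul_pos hk3pos (sub_pos.mpr he1), mul_pos hk1pos (sub_pos.mpr he1)]

end
end

section
/- For every real ε > 0, CQ_2(ε) = EC_2(ε): a pair (ρ_1, ρ_2) of density matrices satisfies e^ε ρ_2 − ρ_1 ⪰ 0 and e^ε ρ_1 − ρ_2 ⪰ 0 if and only if there exist an ε-DP pair (p_1, p_2) of probability vectors in some ℝ^m and density matrices σ_1,…,σ_m such that ρ_i = Σ_{k=1}^m p_i(k) σ_k for i = 1,2. -/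
open scoped BigOperators Classical ComplexOrder
open Matrix

noncomputable section

lemma real_smul_eq_coe_smul {d : ℕ} (c : ℝ) (M : Matrix (Fin d) (Fin d) ℂ) :
    c • M = (c : ℂ) • M := by
  ext i j; simp [Matrix.smul_apply, Complex.real_smul]

lemma psd_coe_smul {d : ℕ} {M : Matrix (Fin d) (Fin d) ℂ} (hM : M.PosSemidef)
    {c : ℝ} (hc : 0 ≤ c) : ((c : ℂ) • M).PosSemidef := by
  constructor
  · have h := hM.1
    unfold Matrix.IsHermitian at *
    rw [conjTranspose_smul, h]
    congr 1
    simp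
  · intro x
    exact (hM.smul (a := (c : ℂ)) (by exact_mod_cast Complex.zero_le_real.mpr hc)).2 x


set_option maxHeartbeats 1000000 in
/-- `CQ_2(ε) = EC_2(ε)`: a pair of density matrices `(ρ₁, ρ₂)` satisfies
`e^ε ρ₂ − ρ₁ ⪰ 0` and `e^ε ρ₁ − ρ₂ ⪰ 0` iff it is a mixture `ρ_i = Σ_k p_i(k) σ_k` of
density matrices `σ_k` with an `ε`-DP pair `(p₁,p₂)` of probability vectors. -/
theorem statement19 (ε : ℝ) (hε : 0 < ε) (d : ℕ)
    (ρ₁ ρ₂ : Matrix (Fin d) (Fin d) ℂ)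
    (h₁ : IsDensityMatrix ρ₁) (h₂ : IsDensityMatrix ρ₂) :
    ((Real.exp ε • ρ₂ - ρ₁).PosSemidef ∧ (Real.exp ε • ρ₁ - ρ₂).PosSemidef) ↔
    ∃ (m : ℕ) (p₁ p₂ : Fin m → ℝ) (σ : Fin m → Matrix (Fin d) (Fin d) ℂ),
      IsProbVec p₁ ∧ IsProbVec p₂ ∧
      (∀ k, p₁ k ≤ Real.exp ε * p₂ k ∧ p₂ k ≤ Real.exp ε * p₁ k) ∧
      (∀ k, IsDensityMatrix (σ k)) ∧
      ρ₁ = ∑ k, (p₁ k : ℂ) • σ k ∧ ρ₂ = ∑ k, (p₂ k : ℂ) • σ k := by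
  have hγ1 : 1 < Real.exp ε := by
    nlinarith [Real.add_one_le_exp ε]
  set γ : ℝ := Real.exp ε with hγdef
  have hγ0 : 0 < γ := by linarith
  have hγm : (0:ℝ) < γ - 1 := by linarith
  have hγp : (0:ℝ) < γ + 1 := by linarith
  have hγmC : ((γ:ℂ) - 1) ≠ 0 := by
    intro h
    have : (γ:ℂ) = 1 := by linear_combination h
    exact absurd (by exact_mod_cast this) (by linarith)
  have hγpC : ((γ:ℂ) + 1) ≠ 0 := by
    intro h
    have : (γ:ℂ) = -1 := by linear_combination h
    have : γ = -1 := by exact_mod_cast this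
    linarith
  constructor
  · rintro ⟨hA, hB⟩
    set τ₁ : Matrix (Fin d) (Fin d) ℂ := (((γ - 1)⁻¹ : ℝ) : ℂ) • (γ • ρ₁ - ρ₂) with hτ₁
    set τ₂ : Matrix (Fin d) (Fin d) ℂ := (((γ - 1)⁻¹ : ℝ) : ℂ) • (γ • ρ₂ - ρ₁) with hτ₂
    have hτ₁d : IsDensityMatrix τ₁ := by
      constructor
      · exact psd_coe_smul hB (by positivity)
      · rw [hτ₁, trace_smul, real_smul_eq_coe_smul, trace_sub, trace_smul, h₁.2, h₂.2]
        rw [smul_eq_mul, smul_eq_mul, mul_one]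
        rw [show ((((γ-1)⁻¹ : ℝ)):ℂ) = ((γ:ℂ)-1)⁻¹ by push_cast; ring]
        field_simp
    have hτ₂d : IsDensityMatrix τ₂ := by
      constructor
      · exact psd_coe_smul hA (by positivity)
      · rw [hτ₂, trace_smul, real_smul_eq_coe_smul, trace_sub, trace_smul, h₂.2, h₁.2]
        rw [smul_eq_mul, smul_eq_mul, mul_one]
        rw [show ((((γ-1)⁻¹ : ℝ)):ℂ) = ((γ:ℂ)-1)⁻¹ by push_cast; ring]
        field_simp
    refine ⟨2, ![γ/(γ+1), 1/(γ+1)], ![1/(γ+1), γ/(γ+1)], ![τ₁, τ₂], ?_, ?_, ?_, ?_, ?_, ?_⟩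
    · constructor
      · intro k
        fin_cases k <;> simp <;> positivity
      · rw [Fin.sum_univ_two]
        simp only [Matrix.cons_val_zero, Matrix.cons_val_one, Matrix.head_cons]
        field_simp
        try ring
    · constructor
      · intro k
        fin_cases k <;> simp <;> positivity
      · rw [Fin.sum_univ_two]
        simp only [Matrix.cons_val_zero, Matrix.cons_val_one, Matrix.head_cons]
        field_simp
        try ring
    · intro k
      fin_cases k <;>
        simp only [Fin.mk_zero, Fin.mk_one, Matrix.cons_val_zero, Matrix.cons_val_one,
          Matrix.head_cons] <;>
        refine ⟨?_, ?_⟩ <;>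
        · rw [← mul_div_assoc, div_le_div_iff₀ hγp hγp]
          nlinarith
    · intro k
      fin_cases k
      · exact hτ₁d
      · exact hτ₂d
    · rw [Fin.sum_univ_two]
      simp only [Matrix.cons_val_zero, Matrix.cons_val_one, Matrix.head_cons]
      rw [hτ₁, hτ₂, real_smul_eq_coe_smul γ ρ₁, real_smul_eq_coe_smul γ ρ₂]
      push_cast
      match_scalars <;> field_simp <;> ring
    · rw [Fin.sum_univ_two]
      simp only [Matrix.cons_val_zero, Matrix.cons_val_one, Matrix.head_cons]
      rw [hτ₁, hτ₂, real_smul_eq_coe_smul γ ρ₁, real_smul_eq_coe_smul γ ρ₂]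
      push_cast
      match_scalars <;> field_simp <;> ring
  · rintro ⟨m, p₁, p₂, σ, hp₁, hp₂, hdp, hσ, e₁, e₂⟩
    have key : ∀ (a b : Fin m → ℝ), (∀ k, b k ≤ γ * a k) →
        (γ • (∑ k, (a k : ℂ) • σ k) - (∑ k, (b k : ℂ) • σ k)).PosSemidef := by
      intro a b hab
      have : γ • (∑ k, (a k : ℂ) • σ k) - (∑ k, (b k : ℂ) • σ k)
          = ∑ k, (((γ * a k - b k : ℝ)) : ℂ) • σ k := by
        rw [real_smul_eq_coe_smul, Finset.smul_sum, ← Finset.sum_sub_distrib]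
        congr 1
        ext k
        rw [smul_smul, ← sub_smul]
        push_cast
        ring_nf
      rw [this]
      apply Finset.sum_induction _ _ (fun x y hx hy => hx.add hy) Matrix.PosSemidef.zero
      intro k _
      exact psd_coe_smul (hσ k).1 (by linarith [hab k])
    constructor
    · rw [e₁, e₂]
      exact key p₂ p₁ fun k => (hdp k).1
    · rw [e₁, e₂]
      exact key p₁ p₂ fun k => (hdp k).2

end
end
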